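/- arXiv:2509.23349 — 3 statements merged into one kernel-verified Lean document; each statement's English description precedes it below -/
import Mathlib

section
/- Let G and H be finite isoclinic groups. If G is a GVZ-group, then H is a GVZ-group. -/
set_option autoImplicit false

open CategoryTheory

noncomputable section

/-- The (quasi-)center of a character: `Z(χ) = {g | |χ(g)| = χ(1)}`. -/
def charCenter {G : Type} [Group G] (χ : G → ℂ) : Set G :=
  {g | ((‖χ g‖ : ℝ) : ℂ) = χ 1}

/-- A character is of central type if it vanishes off its center. -/
def IsCentralType {G : Type} [Group G] (χ : G → ℂ) : Prop :=
  ∀ g : G, g ∉ charCenter χ → χ g = 0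

/-- `χ : G → ℂ` is an irreducible complex character of `G`. -/
def IsIrrChar (G : Type) [Group G] (χ : G → ℂ) : Prop :=
  ∃ V : FDRep ℂ G, Simple V ∧ χ = V.character

/-- `G` is a GVZ-group: every irreducible complex character is of central type. -/
def IsGVZ (G : Type) [Group G] : Prop :=
  ∀ χ : G → ℂ, IsIrrChar G χ → IsCentralType χ

open scoped commutatorElement in
/-- Two groups are isoclinic if there are compatible isomorphisms between their
central quotients and their derived subgroups. -/
def Isoclinic (G H : Type) [Group G] [Group H] : Prop :=
  ∃ (θ : (G ⧸ Subgroup.center G) ≃* (H ⧸ Subgroup.center H))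
    (φ : commutator G ≃* commutator H),
    ∀ (g₁ g₂ : G) (h₁ h₂ : H),
      θ (g₁ : G ⧸ Subgroup.center G) = (h₁ : H ⧸ Subgroup.center H) →
      θ (g₂ : G ⧸ Subgroup.center G) = (h₂ : H ⧸ Subgroup.center H) →
      (φ ⟨⁅g₁, g₂⁆,
          Subgroup.commutator_mem_commutator (Subgroup.mem_top g₁) (Subgroup.mem_top g₂)⟩ : H)
        = ⁅h₁, h₂⁆

section Helpers
variable {G H : Type} [Group G] [Group H]

lemma scalar_id_unique {W : Type} [AddCommGroup W] [Module ℂ W] (hnt : Nontrivial W)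
    {c d : ℂ} (h : c • (LinearMap.id : W →ₗ[ℂ] W) = d • LinearMap.id) : c = d := by
  obtain ⟨x, hx⟩ := exists_ne (0 : W)
  have h1 : c • x = d • x := by
    have := congrArg (fun l : W →ₗ[ℂ] W => l x) h
    simpa using this
  have h2 : (c - d) • x = 0 := by rw [sub_smul, h1, sub_self]
  rcases smul_eq_zero.mp h2 with h3 | h3
  · exact sub_eq_zero.mp h3
  · exact absurd h3 hx

lemma unit_norm_one {P : Type} [Group P] [Finite P] (f : P →* ℂˣ) (p : P) :
    ‖(f p : ℂ)‖ = 1 := by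
  have h1 : ((f p : ℂ)) ^ orderOf p = 1 := by
    rw [← Units.val_pow_eq_pow_val, ← map_pow, pow_orderOf_eq_one, map_one, Units.val_one]
  have h2 : orderOf p ≠ 0 := (orderOf_pos p).ne'
  exact Complex.norm_eq_one_of_pow_eq_one h1 h2

end Helpers

instance : RootableBy ℂˣ ℕ := by
  apply rootableByOfPowLeftSurj
  intro n hn y
  obtain ⟨x, hx⟩ := IsAlgClosed.exists_pow_nat_eq (y : ℂ) (Nat.pos_of_ne_zero hn)
  have hx0 : x ≠ 0 := by
    intro h; rw [h, zero_pow hn] at hx; exact (Units.ne_zero y) hx.symm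
  exact ⟨Units.mk0 x hx0, Units.ext (by simp [hx])⟩

instance : RootableBy ℂˣ ℤ := Group.rootableByIntOfRootableByNat ℂˣ

instance : DivisibleBy (Additive ℂˣ) ℤ where
  div a n := Additive.ofMul (RootableBy.root (Additive.toMul a) n)
  div_zero a := by
    show Additive.ofMul (RootableBy.root (Additive.toMul a) (0:ℤ)) = 0
    rw [RootableBy.root_zero]; rfl
  div_cancel {n} a hn := by
    show n • Additive.ofMul (RootableBy.root (Additive.toMul a) n) = a
    rw [← ofMul_zpow, RootableBy.root_cancel _ hn]; rfl

/-- Extend a character of a subgroup of a commutative group to the whole group. -/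
theorem extend_char_comm {P : Type} [CommGroup P] (A : Subgroup P) (lam : A →* ℂˣ) :
    ∃ mu : P →* ℂˣ, ∀ a : A, mu a = lam a := by
  let X : AddCommGrpCat := AddCommGrpCat.of (Additive A)
  let Y : AddCommGrpCat := AddCommGrpCat.of (Additive P)
  let J : AddCommGrpCat := AddCommGrpCat.of (Additive ℂˣ)
  let g : X ⟶ Y := AddCommGrpCat.ofHom (MonoidHom.toAdditive A.subtype)
  have : Mono g := by
    rw [AddCommGrpCat.mono_iff_injective]
    exact fun a b h => Subtype.ext (congrArg Additive.toMul h)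
  let f : X ⟶ J := AddCommGrpCat.ofHom (MonoidHom.toAdditive lam)
  have hJ : Injective J := AddCommGrpCat.injective_of_divisible _
  let h : Y ⟶ J := Injective.factorThru f g
  refine ⟨MonoidHom.toAdditive.symm h.hom, fun a => ?_⟩
  have := congrArg (fun φ => φ (Additive.ofMul a)) (Injective.comp_factorThru f g)
  exact this


/-- Extend a character from a subgroup meeting the commutator subgroup trivially. -/
theorem extend_char {P : Type} [Group P] (A : Subgroup P)
    (hA : A ⊓ commutator P = ⊥) (lam : A →* ℂˣ) :
    ∃ mu : P →* ℂˣ, ∀ a : A, mu a = lam a := by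
  classical
  let q : P →* Abelianization P := Abelianization.of
  have hinj : Function.Injective (q.comp A.subtype) := by
    intro a b h
    have h1 : q ((a : P) * (b : P)⁻¹) = 1 := by
      simp only [map_mul, map_inv]
      rw [show q (a : P) = q (b : P) from h]
      group
    have hmem : (a : P) * (b : P)⁻¹ ∈ commutator P := by
      rwa [show (q ((a:P) * (b:P)⁻¹) = 1) ↔ ((a:P) * (b:P)⁻¹ ∈ commutator P) from
        QuotientGroup.eq_one_iff _] at h1
    have : (a : P) * (b : P)⁻¹ ∈ A ⊓ commutator P :=
      ⟨A.mul_mem a.2 (A.inv_mem b.2), hmem⟩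
    rw [hA, Subgroup.mem_bot] at this
    exact Subtype.ext (by rw [mul_inv_eq_one] at this; exact this)
  let e : A ≃* (q.comp A.subtype).range := MonoidHom.ofInjective hinj
  obtain ⟨mu1, hmu1⟩ := extend_char_comm (q.comp A.subtype).range (lam.comp (e.symm : _ →* A))
  refine ⟨mu1.comp q, fun a => ?_⟩
  have h2 : mu1 (q a) = lam (e.symm (e a)) := by
    have := hmu1 (e a)
    have he : ((e a : (q.comp A.subtype).range) : Abelianization P) = q a := rfl
    rw [← he]
    exact this
  simpa [MulEquiv.symm_apply_apply] using h2

variable {G : Type} [Group G]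

/-- The restriction of a representation to an invariant submodule, as a `Representation`. -/
def subRep (V : FDRep ℂ G) (p : Submodule ℂ V) (hp : ∀ g : G, ∀ x ∈ p, V.ρ g x ∈ p) :
    Representation ℂ G p where
  toFun g := (V.ρ g).restrict (hp g)
  map_one' := by ext x; simp
  map_mul' g h := by ext x; simp

lemma hom_eq_zero_iff {V W : FDRep ℂ G} (f : V ⟶ W) :
    f = 0 ↔ (f.hom.hom.hom : V →ₗ[ℂ] W) = 0 := by
  constructor
  · intro h; rw [h]; rfl
  · intro h
    apply Action.hom_ext
    apply FGModuleCat.hom_ext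
    exact h

lemma simple_nontrivial (V : FDRep ℂ G) [Simple V] : Nontrivial V := by
  by_contra h
  have hs : Subsingleton V := not_nontrivial_iff_subsingleton.mp h
  have : 𝟙 V = 0 := by
    apply Action.hom_ext
    apply FGModuleCat.hom_ext
    apply LinearMap.ext
    intro x
    exact @Subsingleton.elim _ hs _ _
  exact CategoryTheory.id_nonzero V this

/-- Invariant submodules of a simple `FDRep` are trivial. -/
lemma simple_invariant_submodule (V : FDRep ℂ G) [Simple V] (p : Submodule ℂ V)
    (hp : ∀ g : G, ∀ x ∈ p, V.ρ g x ∈ p) : p = ⊥ ∨ p = ⊤ := by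
  by_contra h
  push_neg at h
  obtain ⟨hb, ht⟩ := h
  let P : FDRep ℂ G := FDRep.of (subRep V p hp)
  let ι : P ⟶ V := ⟨FGModuleCat.ofHom (p.subtype : P →ₗ[ℂ] V), fun g => by
    apply FGModuleCat.hom_ext; apply LinearMap.ext; intro x; rfl⟩
  have hmono : Mono ι := by
    constructor
    intro Z u v huv
    apply Action.hom_ext
    apply FGModuleCat.hom_ext
    apply LinearMap.ext
    intro z
    have := congrArg (fun (l : Z.V ⟶ V.V) => l z) (congrArg Action.Hom.hom huv)
    simp only at this
    exact Subtype.ext this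
  have hne : ι ≠ 0 := by
    rw [Ne, hom_eq_zero_iff]
    intro h0
    apply hb
    ext x
    simp only [Submodule.mem_bot]
    constructor
    · intro hx
      have := congrArg (fun (l : P →ₗ[ℂ] V) => l ⟨x, hx⟩) h0
      exact this
    · intro hx; rw [hx]; exact p.zero_mem
  have hiso : IsIso ι := (Simple.mono_isIso_iff_nonzero ι).mpr hne
  -- then the underlying map is surjective, contradiction with p ≠ ⊤
  apply ht
  have hsurj : Function.Surjective (ι.hom.hom.hom : P →ₗ[ℂ] V) := by
    intro y
    refine ⟨(inv ι).hom y, ?_⟩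
    have h1 : (inv ι ≫ ι) = 𝟙 V := IsIso.inv_hom_id ι
    have h2 := congrArg (fun (l : V.V ⟶ V.V) => l y) (congrArg Action.Hom.hom h1)
    exact h2
  rw [Submodule.eq_top_iff']
  intro y
  obtain ⟨x, hx⟩ := hsurj y
  rw [← hx]
  exact x.2

/-- A nontrivial `FDRep` with no nontrivial invariant submodules is simple. -/
lemma simple_of_invariant_submodule (V : FDRep ℂ G) (hnt : Nontrivial V)
    (h : ∀ p : Submodule ℂ V, (∀ g : G, ∀ x ∈ p, V.ρ g x ∈ p) → p = ⊥ ∨ p = ⊤) :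
    Simple V := by
  constructor
  intro Y f hmono
  constructor
  · intro hiso h0
    have hf0 : (f.hom.hom.hom : Y →ₗ[ℂ] V) = 0 := by rw [h0]; rfl
    have h1 : (inv f ≫ f) = 𝟙 V := IsIso.inv_hom_id f
    have key : ∀ v : V, v = (f.hom.hom.hom : Y →ₗ[ℂ] V) ((inv f).hom v) := by
      intro v
      have h2 := congrArg (fun (l : V.V ⟶ V.V) => l v) (congrArg Action.Hom.hom h1)
      exact h2.symm
    obtain ⟨x, y, hxy⟩ := hnt
    apply hxy
    rw [key x, key y, hf0]
    rfl
  · intro hne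
    -- range of f.hom is invariant
    have hrange : ∀ g : G, ∀ x ∈ LinearMap.range (f.hom.hom.hom : Y →ₗ[ℂ] V), V.ρ g x ∈
        LinearMap.range (f.hom.hom.hom : Y →ₗ[ℂ] V) := by
      rintro g x ⟨y, rfl⟩
      refine ⟨Y.ρ g y, ?_⟩
      have hc := congrArg (fun (l : Y.V ⟶ V.V) => l y) (f.comm g)
      exact hc
    have hker : ∀ g : G, ∀ x ∈ LinearMap.ker (f.hom.hom.hom : Y →ₗ[ℂ] V), Y.ρ g x ∈
        LinearMap.ker (f.hom.hom.hom : Y →ₗ[ℂ] V) := by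
      intro g x hx
      rw [LinearMap.mem_ker] at hx ⊢
      have hc := congrArg (fun (l : Y.V ⟶ V.V) => l x) (f.comm g)
      have hc' : (f.hom.hom.hom : Y →ₗ[ℂ] V) (Y.ρ g x) = V.ρ g ((f.hom.hom.hom : Y →ₗ[ℂ] V) x) := hc
      show (f.hom.hom.hom : Y →ₗ[ℂ] V) (Y.ρ g x) = 0
      rw [hc', hx, map_zero]
    -- the kernel is trivial, by mono
    have hkbot : LinearMap.ker (f.hom.hom.hom : Y →ₗ[ℂ] V) = ⊥ := by
      set k := LinearMap.ker (f.hom.hom.hom : Y →ₗ[ℂ] V) with hk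
      let K : FDRep ℂ G := FDRep.of (subRep Y k hker)
      let κ : K ⟶ Y := ⟨FGModuleCat.ofHom (k.subtype : K →ₗ[ℂ] Y), fun g => by
        apply FGModuleCat.hom_ext; apply LinearMap.ext; intro x; rfl⟩
      have hcomp : κ ≫ f = (0 : K ⟶ Y) ≫ f := by
        apply Action.hom_ext
        apply FGModuleCat.hom_ext
        apply LinearMap.ext
        intro x
        let xk : ↥k := x
        have hx2 : (f.hom.hom.hom : Y →ₗ[ℂ] V) xk.1 = 0 := xk.2
        show (f.hom.hom.hom : Y →ₗ[ℂ] V) xk.1 = (f.hom.hom.hom : Y →ₗ[ℂ] V) 0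
        rw [hx2, map_zero]
      have hκ0 : κ = 0 := Mono.right_cancellation (f := f) κ 0 hcomp
      rw [Submodule.eq_bot_iff]
      intro x hx
      have := congrArg (fun (l : K.V ⟶ Y.V) => l ⟨x, hx⟩) (congrArg Action.Hom.hom hκ0)
      exact this
    -- range is invariant, hence ⊥ or ⊤
    rcases h (LinearMap.range (f.hom.hom.hom : Y →ₗ[ℂ] V)) hrange with hr | hr
    · exfalso
      apply hne
      rw [hom_eq_zero_iff]
      apply LinearMap.ext
      intro x
      have : (f.hom.hom.hom : Y →ₗ[ℂ] V) x ∈ LinearMap.range (f.hom.hom.hom : Y →ₗ[ℂ] V) :=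
        LinearMap.mem_range_self _ x
      rw [hr, Submodule.mem_bot] at this
      simpa using this
    · -- bijective, so iso
      have hbij : Function.Bijective (f.hom.hom.hom : Y →ₗ[ℂ] V) :=
        ⟨LinearMap.ker_eq_bot.mp hkbot, LinearMap.range_eq_top.mp hr⟩
      let e : Y ≃ₗ[ℂ] V := LinearEquiv.ofBijective _ hbij
      have hef : ∀ x : Y, e x = (f.hom.hom.hom : Y →ₗ[ℂ] V) x := fun _ => rfl
      let ginv : V ⟶ Y := ⟨FGModuleCat.ofHom (e.symm.toLinearMap : V →ₗ[ℂ] Y), fun g => by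
        apply FGModuleCat.hom_ext; apply LinearMap.ext
        intro x
        show e.symm (V.ρ g x) = Y.ρ g (e.symm x)
        apply e.injective
        rw [e.apply_symm_apply]
        show V.ρ g x = (f.hom.hom.hom : Y →ₗ[ℂ] V) (Y.ρ g (e.symm x))
        have hc' : (f.hom.hom.hom : Y →ₗ[ℂ] V) (Y.ρ g (e.symm x))
            = V.ρ g ((f.hom.hom.hom : Y →ₗ[ℂ] V) (e.symm x)) :=
          congrArg (fun (l : Y.V ⟶ V.V) => l (e.symm x)) (f.comm g)
        rw [hc']
        have h4 : (f.hom.hom.hom : Y →ₗ[ℂ] V) (e.symm x) = x := e.apply_symm_apply x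
        rw [h4]⟩
      refine ⟨⟨ginv, ?_, ?_⟩⟩
      · apply Action.hom_ext
        apply FGModuleCat.hom_ext
        apply LinearMap.ext
        intro x
        show e.symm ((f.hom.hom.hom : Y →ₗ[ℂ] V) x) = x
        rw [← hef, e.symm_apply_apply]
      · apply Action.hom_ext
        apply FGModuleCat.hom_ext
        apply LinearMap.ext
        intro x
        show (f.hom.hom.hom : Y →ₗ[ℂ] V) (e.symm x) = x
        rw [← hef, e.apply_symm_apply]

variable {G : Type} [Group G]

/-- A central element acts on a simple `FDRep` by a nonzero scalar. -/
lemma central_scalar (V : FDRep ℂ G) [Simple V] (hnt : Nontrivial V)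
    (z : G) (hz : z ∈ Subgroup.center G) :
    ∃ c : ℂˣ, V.ρ z = (c : ℂ) • (LinearMap.id : V →ₗ[ℂ] V) := by
  let m : V ⟶ V := ⟨FGModuleCat.ofHom (V.ρ z : V →ₗ[ℂ] V), fun g => by
    apply FGModuleCat.hom_ext; apply LinearMap.ext
    intro x
    show V.ρ z (V.ρ g x) = V.ρ g (V.ρ z x)
    rw [← Module.End.mul_apply, ← map_mul, ← Module.End.mul_apply, ← map_mul,
      (Subgroup.mem_center_iff.mp hz g)]⟩
  obtain ⟨c, hc⟩ := endomorphism_simple_eq_smul_id ℂ m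
  have hpt : ∀ x : V, V.ρ z x = c • x := by
    intro x
    have h1 := congrArg (fun (l : V.V ⟶ V.V) => l x) (congrArg Action.Hom.hom hc)
    have h2 : (c • (𝟙 V : V ⟶ V)).hom x = (V.ρ z) x := h1
    rw [← h2]
    show _ = c • ((𝟙 V : V ⟶ V).hom x)
    rfl
  have hc0 : c ≠ 0 := by
    intro h0
    obtain ⟨x, y, hxy⟩ := hnt
    apply hxy
    have hx : x = V.ρ z⁻¹ (V.ρ z x) := by
      rw [← Module.End.mul_apply, ← map_mul, inv_mul_cancel, map_one]; rfl
    have hy : y = V.ρ z⁻¹ (V.ρ z y) := by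
      rw [← Module.End.mul_apply, ← map_mul, inv_mul_cancel, map_one]; rfl
    rw [hx, hy, hpt x, hpt y, h0, zero_smul, zero_smul]
  exact ⟨Units.mk0 c hc0, by apply LinearMap.ext; intro x; simpa using hpt x⟩


variable {G H : Type} [Group G] [Group H]

section setup
variable (θ : (G ⧸ Subgroup.center G) ≃* (H ⧸ Subgroup.center H))

/-- The isoclinism subgroup of `G × H`. -/
def isoU : Subgroup (G × H) where
  carrier := {p | θ (p.1 : G ⧸ Subgroup.center G) = (p.2 : H ⧸ Subgroup.center H)}
  one_mem' := by simp
  mul_mem' := by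
    intro a b ha hb
    show θ ((a.1 * b.1 : G) : G ⧸ Subgroup.center G) = ((a.2 * b.2 : H) : _)
    rw [show ((a.1 * b.1 : G) : G ⧸ Subgroup.center G) = (a.1 : _) * (b.1 : _) from rfl]
    rw [map_mul, ha, hb]
    rfl
  inv_mem' := by
    intro a ha
    have h : θ ((a.1 : G ⧸ Subgroup.center G))⁻¹ = ((a.2 : H ⧸ Subgroup.center H))⁻¹ := by
      rw [map_inv, ha]
    exact h

/-- The embedding of `Z(H)` into the isoclinism subgroup. -/
def isoEmb : Subgroup.center H →* isoU (G := G) θ where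
  toFun z := ⟨(1, (z : H)), by
    show θ ((1 : G) : G ⧸ Subgroup.center G) = ((z : H) : H ⧸ Subgroup.center H)
    rw [show ((1 : G) : G ⧸ Subgroup.center G) = 1 from rfl, map_one]
    exact ((QuotientGroup.eq_one_iff (z : H)).mpr z.2).symm⟩
  map_one' := rfl
  map_mul' a b := by
    apply Subtype.ext
    show ((1 : G), ((a * b : _) : H)) = ((1*1 : G), ((a : H) * (b : H)))
    simp

lemma isoEmb_injective : Function.Injective (isoEmb (G := G) (H := H) θ) := by
  intro a b hab
  have h2 := congrArg (fun u : (isoU (G := G) θ) => (u : G × H).2) hab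
  exact Subtype.ext h2

end setup

section graph
variable (θ : (G ⧸ Subgroup.center G) ≃* (H ⧸ Subgroup.center H))
  (φ : commutator G ≃* commutator H)

/-- The graph of `φ` as a homomorphism into `G × H`. -/
def isoGraph : commutator G →* G × H where
  toFun c := ((c : G), ((φ c : commutator H) : H))
  map_one' := by simp
  map_mul' a b := by simp

open scoped commutatorElement in
lemma commutator_isoU_le_graph
    (hcomp : ∀ (g₁ g₂ : G) (h₁ h₂ : H),
      θ (g₁ : G ⧸ Subgroup.center G) = (h₁ : H ⧸ Subgroup.center H) →
      θ (g₂ : G ⧸ Subgroup.center G) = (h₂ : H ⧸ Subgroup.center H) →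
      (φ ⟨⁅g₁, g₂⁆,
          Subgroup.commutator_mem_commutator (Subgroup.mem_top g₁) (Subgroup.mem_top g₂)⟩ : H)
        = ⁅h₁, h₂⁆) :
    ⁅isoU (G := G) θ, isoU (G := G) θ⁆ ≤ (isoGraph φ).range := by
  rw [Subgroup.commutator_le]
  intro p hp q hq
  have h1 : θ (p.1 : G ⧸ Subgroup.center G) = (p.2 : H ⧸ Subgroup.center H) := hp
  have h2 : θ (q.1 : G ⧸ Subgroup.center G) = (q.2 : H ⧸ Subgroup.center H) := hq
  refine ⟨⟨⁅p.1, q.1⁆, Subgroup.commutator_mem_commutator (Subgroup.mem_top p.1)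
    (Subgroup.mem_top q.1)⟩, ?_⟩
  have hφ := hcomp p.1 q.1 p.2 q.2 h1 h2
  show (⁅p.1, q.1⁆, _) = ⁅p, q⁆
  rw [hφ]
  rfl

open scoped commutatorElement in
/-- The kernel of projection meets the commutator subgroup of `U` trivially. -/
lemma isoEmb_inter_commutator
    (hcomp : ∀ (g₁ g₂ : G) (h₁ h₂ : H),
      θ (g₁ : G ⧸ Subgroup.center G) = (h₁ : H ⧸ Subgroup.center H) →
      θ (g₂ : G ⧸ Subgroup.center G) = (h₂ : H ⧸ Subgroup.center H) →
      (φ ⟨⁅g₁, g₂⁆,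
          Subgroup.commutator_mem_commutator (Subgroup.mem_top g₁) (Subgroup.mem_top g₂)⟩ : H)
        = ⁅h₁, h₂⁆) :
    (isoEmb (G := G) θ).range ⊓ commutator (isoU (G := G) θ) = ⊥ := by
  rw [eq_bot_iff]
  intro u hu
  obtain ⟨⟨z, hz⟩, hcomm⟩ := hu
  rw [Subgroup.mem_bot]
  -- u is in the commutator subgroup of U, so its image in G × H is in the graph of φ
  have hmap : (u : G × H) ∈ ⁅isoU (G := G) θ, isoU (G := G) θ⁆ := by
    have h1 : (u : G × H) ∈ Subgroup.map (isoU (G := G) θ).subtype (commutator (isoU (G := G) θ)) :=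
      ⟨u, hcomm, rfl⟩
    rw [commutator_def, Subgroup.map_commutator] at h1
    rwa [show Subgroup.map (isoU (G := G) θ).subtype ⊤ = isoU (G := G) θ by
      rw [← MonoidHom.range_eq_map, Subgroup.range_subtype]] at h1
  have hgr : (u : G × H) ∈ (isoGraph φ).range :=
    commutator_isoU_le_graph θ φ hcomp hmap
  obtain ⟨c, hc⟩ := hgr
  have hc1 : ((c : G), ((φ c : commutator H) : H)) = (u : G × H) := hc
  have hu1 : (u : G × H).1 = 1 := by rw [← hz]; rfl
  have hcG : (c : G) = 1 := by rw [← hu1, ← hc1]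
  have hc0 : c = 1 := Subtype.ext hcG
  have hu2 : (u : G × H).2 = 1 := by
    rw [← hc1, hc0]
    simp
  apply Subtype.ext
  have : (u : G × H) = 1 := Prod.ext hu1 hu2
  exact this
section MoreHelpers
variable {G H : Type} [Group G] [Group H]

/-- Choose the scalar character by which the center acts on a simple representation. -/
lemma exists_central_char (W : FDRep ℂ H) [Simple W] :
    ∃ lam0 : Subgroup.center H →* ℂˣ,
      ∀ z : Subgroup.center H, W.ρ (z : H) = ((lam0 z : ℂ)) • LinearMap.id := by
  have hnt : Nontrivial W := simple_nontrivial W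
  choose c hc using fun z : Subgroup.center H => central_scalar W hnt (z : H) z.2
  have kc : ∀ (z : Subgroup.center H) (d : ℂ),
      W.ρ (z : H) = d • (LinearMap.id : W →ₗ[ℂ] W) → (c z : ℂ) = d := by
    intro z d hd
    exact scalar_id_unique hnt ((hc z).symm.trans hd)
  refine ⟨{ toFun := c, map_one' := ?_, map_mul' := ?_ }, hc⟩
  · apply Units.ext
    have : W.ρ ((1 : Subgroup.center H) : H) = (1 : ℂ) • LinearMap.id := by
      rw [show ((1 : Subgroup.center H) : H) = 1 from rfl, map_one, one_smul]
      rfl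
    simpa using kc 1 1 this
  · intro z₁ z₂
    apply Units.ext
    have hmul : W.ρ ((z₁ * z₂ : Subgroup.center H) : H)
        = ((c z₁ : ℂ) * (c z₂ : ℂ)) • (LinearMap.id : W →ₗ[ℂ] W) := by
      rw [show ((z₁ * z₂ : Subgroup.center H) : H) = (z₁ : H) * (z₂ : H) from rfl, map_mul,
        hc z₁, hc z₂, smul_mul_assoc, mul_smul_comm, smul_smul]
      rfl
    simpa using kc (z₁ * z₂) _ hmul

/-- Extend a character through an injective homomorphism whose range meets the
commutator subgroup trivially. -/
theorem extend_char_inj {P Z : Type} [Group P] [Group Z] (j : Z →* P)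
    (hj : Function.Injective j) (hjr : j.range ⊓ commutator P = ⊥) (lam : Z →* ℂˣ) :
    ∃ mu : P →* ℂˣ, ∀ z : Z, mu (j z) = lam z := by
  obtain ⟨mu, hmu⟩ := extend_char j.range hjr
    (lam.comp ((MonoidHom.ofInjective hj).symm : j.range →* Z))
  refine ⟨mu, fun z => ?_⟩
  have h1 := hmu ⟨j z, ⟨z, rfl⟩⟩
  rw [show (⟨j z, ⟨z, rfl⟩⟩ : j.range) = MonoidHom.ofInjective hj z from
    Subtype.ext (by rw [MonoidHom.ofInjective_apply])] at h1
  simpa [MonoidHom.ofInjective_apply] using h1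

end MoreHelpers

/-- If `G` and `H` are finite isoclinic groups and `G` is a GVZ-group,
then `H` is a GVZ-group. -/
theorem isoclinic_GVZ {G H : Type} [Group G] [Group H] [Finite G] [Finite H]
    (hiso : Isoclinic G H) (hG : IsGVZ G) : IsGVZ H := by
  classical
  obtain ⟨θ, φ, hcomp⟩ := hiso
  intro ψ hψ
  obtain ⟨W, hW, rfl⟩ := hψ
  haveI := hW
  have hnt : Nontrivial W := simple_nontrivial W
  obtain ⟨lam0, hlam0⟩ := exists_central_char W
  have hfinU : Finite (isoU (G := G) θ) := Subtype.finite
  obtain ⟨mu, hmu⟩ := extend_char_inj (isoEmb (G := G) θ) (isoEmb_injective θ)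
    (isoEmb_inter_commutator θ φ hcomp) lam0
  set t : G → H := fun g => (θ ((g : G ⧸ Subgroup.center G))).out with ht_def
  have ht : ∀ g : G, ((t g : H) : H ⧸ Subgroup.center H) = θ (g : G ⧸ Subgroup.center G) :=
    fun g => QuotientGroup.out_eq' _
  set s : H → G := fun h => (θ.symm ((h : H ⧸ Subgroup.center H))).out with hs_def
  have hs : ∀ h : H, θ ((s h : G) : G ⧸ Subgroup.center G) = (h : H ⧸ Subgroup.center H) := by
    intro h
    have h1 : ((s h : G) : G ⧸ Subgroup.center G) = θ.symm ((h : H ⧸ Subgroup.center H)) :=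
      QuotientGroup.out_eq' _
    rw [h1, MulEquiv.apply_symm_apply]
  have hmemU : ∀ g : G, (g, t g) ∈ isoU (G := G) θ := fun g => (ht g).symm
  set u : G → isoU (G := G) θ := fun g => ⟨(g, t g), hmemU g⟩ with hu_def
  have hpair : ∀ (g : G) (h : H)
      (hgh : θ (g : G ⧸ Subgroup.center G) = (h : H ⧸ Subgroup.center H)),
      ∃ z : Subgroup.center H, h = t g * (z : H) ∧
        W.ρ h = ((lam0 z : ℂ)) • W.ρ (t g) ∧
        mu (⟨(g, h), hgh⟩ : isoU (G := G) θ) = mu (u g) * lam0 z := by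
    intro g h hgh
    have hz : (t g)⁻¹ * h ∈ Subgroup.center H := by
      rw [← QuotientGroup.eq]
      rw [ht g, hgh]
    refine ⟨⟨(t g)⁻¹ * h, hz⟩, by group, ?_, ?_⟩
    · have hh : h = t g * ((t g)⁻¹ * h) := by group
      calc W.ρ h = W.ρ (t g * ((t g)⁻¹ * h)) := by rw [← hh]
      _ = W.ρ (t g) * W.ρ ((t g)⁻¹ * h) := by rw [map_mul]
      _ = W.ρ (t g) * (((lam0 ⟨(t g)⁻¹ * h, hz⟩ : ℂ)) • LinearMap.id) := by
            rw [hlam0 ⟨(t g)⁻¹ * h, hz⟩]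
      _ = ((lam0 ⟨(t g)⁻¹ * h, hz⟩ : ℂ)) • W.ρ (t g) := by
            rw [mul_smul_comm, Module.End.mul_eq_comp, LinearMap.comp_id]
    · have hsplit : (⟨(g, h), hgh⟩ : isoU (G := G) θ)
          = u g * isoEmb (G := G) θ ⟨(t g)⁻¹ * h, hz⟩ := by
        apply Subtype.ext
        show (g, h) = (g * 1, t g * ((t g)⁻¹ * h))
        rw [mul_one]
        exact Prod.ext rfl (by group)
      rw [hsplit, map_mul, hmu]
  have h11 : θ ((1 : G) : G ⧸ Subgroup.center G) = ((1 : H) : H ⧸ Subgroup.center H) := by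
    simp
  set ρV : Representation ℂ G W :=
    { toFun := fun g => ((mu (u g) : ℂ))⁻¹ • W.ρ (t g)
      map_one' := by
        obtain ⟨z, hz1, hz2, hz3⟩ := hpair 1 1 h11
        have e1 : (⟨(1, 1), h11⟩ : isoU (G := G) θ) = 1 := Subtype.ext rfl
        have h3 : mu (u 1) * lam0 z = 1 := by rw [← hz3, e1, map_one]
        have h3' : (mu (u 1) : ℂ) * (lam0 z : ℂ) = 1 := by
          rw [← Units.val_mul, h3, Units.val_one]
        show ((mu (u 1) : ℂ))⁻¹ • W.ρ (t 1) = 1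
        have h2 : (1 : W →ₗ[ℂ] W) = (lam0 z : ℂ) • W.ρ (t 1) := by
          rw [← hz2]
          exact (map_one W.ρ).symm
        have h4 : W.ρ (t 1) = ((lam0 z : ℂ))⁻¹ • (1 : W →ₗ[ℂ] W) := by
          rw [h2, smul_smul, inv_mul_cancel₀ (Units.ne_zero (lam0 z)), one_smul]
        rw [h4, smul_smul]
        have h5 : ((mu (u 1) : ℂ))⁻¹ * ((lam0 z : ℂ))⁻¹ = 1 := by
          rw [← mul_inv, h3', inv_one]
        rw [h5, one_smul]
      map_mul' := by
        intro g₁ g₂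
        have hgh : θ ((g₁ * g₂ : G) : G ⧸ Subgroup.center G)
            = ((t g₁ * t g₂ : H) : H ⧸ Subgroup.center H) := by
          rw [show ((g₁ * g₂ : G) : G ⧸ Subgroup.center G)
            = (g₁ : G ⧸ Subgroup.center G) * (g₂ : _) from rfl, map_mul, ← ht g₁, ← ht g₂]
          rfl
        obtain ⟨z, hz1, hz2, hz3⟩ := hpair (g₁ * g₂) (t g₁ * t g₂) hgh
        have e1 : (⟨(g₁ * g₂, t g₁ * t g₂), hgh⟩ : isoU (G := G) θ) = u g₁ * u g₂ :=
          Subtype.ext rfl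
        have h3 : mu (u g₁) * mu (u g₂) = mu (u (g₁ * g₂)) * lam0 z := by
          rw [← map_mul, ← e1, hz3]
        have h3' : (mu (u g₁) : ℂ) * (mu (u g₂) : ℂ) = (mu (u (g₁ * g₂)) : ℂ) * (lam0 z : ℂ) := by
          rw [← Units.val_mul, ← Units.val_mul, h3]
        show ((mu (u (g₁ * g₂)) : ℂ))⁻¹ • W.ρ (t (g₁ * g₂))
          = (((mu (u g₁) : ℂ))⁻¹ • W.ρ (t g₁)) * (((mu (u g₂) : ℂ))⁻¹ • W.ρ (t g₂))
        rw [smul_mul_assoc, mul_smul_comm, ← map_mul, hz2, smul_smul, smul_smul]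
        congr 1
        have u1 : (mu (u g₁) : ℂ) ≠ 0 := Units.ne_zero _
        have u2 : (mu (u g₂) : ℂ) ≠ 0 := Units.ne_zero _
        have u3 : (mu (u (g₁ * g₂)) : ℂ) ≠ 0 := Units.ne_zero _
        have u4 : (lam0 z : ℂ) ≠ 0 := Units.ne_zero _
        field_simp
        linear_combination h3' } with hρV_def
  set V : FDRep ℂ G := FDRep.of ρV with hV_def
  haveI hsimp : Simple V := by
    apply simple_of_invariant_submodule
    · exact hnt
    · intro p hp
      apply simple_invariant_submodule W p
      intro h x hx
      obtain ⟨z, hz1, hz2, hz3⟩ := hpair (s h) h (hs h)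
      have hx1 : W.ρ h x = ((lam0 z : ℂ) * (mu (u (s h)) : ℂ)) • (V.ρ (s h) x) := by
        have e2 : V.ρ (s h) x = ((mu (u (s h)) : ℂ))⁻¹ • (W.ρ (t (s h)) x) := rfl
        rw [e2, hz2]
        rw [smul_smul]
        show ((lam0 z : ℂ)) • W.ρ (t (s h)) x
          = ((lam0 z : ℂ) * (mu (u (s h)) : ℂ) * ((mu (u (s h)) : ℂ))⁻¹) • W.ρ (t (s h)) x
        rw [mul_assoc, mul_inv_cancel₀ (Units.ne_zero _), mul_one]
      rw [hx1]
      exact Submodule.smul_mem _ _ (hp (s h) x hx)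
  have hcharV : ∀ g : G, V.character g = ((mu (u g) : ℂ))⁻¹ * W.character (t g) := by
    intro g
    show LinearMap.trace ℂ _ (((mu (u g) : ℂ))⁻¹ • W.ρ (t g)) = _
    rw [map_smul]
    rfl
  intro h hnotin
  obtain ⟨z, hz1, hz2, hz3⟩ := hpair (s h) h (hs h)
  have hψh : W.character h = (lam0 z : ℂ) * W.character (t (s h)) := by
    show LinearMap.trace ℂ _ (W.ρ h) = _
    rw [hz2, map_smul]
    rfl
  have hVg : V.character (s h) = ((mu (u (s h)) : ℂ))⁻¹ * (((lam0 z : ℂ))⁻¹ * W.character h) := by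
    rw [hcharV, hψh, inv_mul_cancel_left₀ (Units.ne_zero (lam0 z))]
  have habs : ‖V.character (s h)‖ = ‖W.character h‖ := by
    rw [hVg, norm_mul, norm_mul, norm_inv, norm_inv, unit_norm_one mu, unit_norm_one lam0]
    simp
  have hone : V.character 1 = W.character 1 := by
    have e1 : ρV 1 = 1 := map_one ρV
    have e2 : W.ρ (1 : H) = 1 := map_one W.ρ
    show LinearMap.trace ℂ _ (ρV 1) = LinearMap.trace ℂ _ (W.ρ (1 : H))
    rw [e1, e2]
  have hct := hG V.character ⟨V, hsimp, rfl⟩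
  have hnot2 : (s h) ∉ charCenter V.character := by
    intro hmem
    apply hnotin
    show ((‖W.character h‖ : ℝ) : ℂ) = W.character 1
    have hmem' : ((‖V.character (s h)‖ : ℝ) : ℂ) = V.character 1 := hmem
    rw [← habs, hmem', hone]
  have h0 := hct (s h) hnot2
  rw [hVg] at h0
  rcases mul_eq_zero.mp h0 with h1 | h1
  · exact absurd h1 (inv_ne_zero (Units.ne_zero _))
  rcases mul_eq_zero.mp h1 with h2 | h2
  · exact absurd h2 (inv_ne_zero (Units.ne_zero _))
  exact h2
end graph
end
end

section
/- Let p be an odd prime, γ ≥ 1, 0 ≤ ρ ≤ γ, and let G = ⟨a, b | [a,b]^{p^γ} = [[a,b],a] = [[a,b],b] = 1, a^{p^γ} = [a,b]^{p^ρ}, b^{p^γ} = 1⟩ (the group G_{(γ,γ,γ;ρ,γ)}). For each 1 ≤ δ ≤ γ, the abelian quotient ⟨a^{p^δ}, b^{p^δ}, [a,b]⟩/⟨[a,b]^{p^δ}⟩ is isomorphic to C_{p^{γ−ρ}} × C_{p^{γ−δ}} × C_{p^ρ} if ρ < δ < γ−ρ, and to C_{p^{γ−δ}} × C_{p^{γ−δ}}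 × C_{p^δ} otherwise. -/
set_option autoImplicit false

open scoped commutatorElement

noncomputable section

set_option maxHeartbeats 1000000

namespace Tau5Aux

variable {H : Type*} [Group H]

noncomputable def homOfPow (h : H) (n : ℕ) (hh : h ^ n = 1) :
    Multiplicative (ZMod n) →* H :=
  MonoidHom.toAdditiveRight.symm
    (ZMod.lift n ⟨MonoidHom.toAdditiveRight (zpowersHom H h), by
      have : h ^ (n : ℤ) = 1 := by rw [zpow_natCast, hh]
      exact (show (MonoidHom.toAdditiveRight (zpowersHom H h)) (n : ℤ) = 0 from congrArg Additive.ofMul this)⟩)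

lemma homOfPow_apply_int (h : H) (n : ℕ) (hh : h ^ n = 1) (m : ℤ) :
    homOfPow h n hh (Multiplicative.ofAdd ((m : ℤ) : ZMod n)) = h ^ m := by
  have := ZMod.lift_coe n ⟨MonoidHom.toAdditiveRight (zpowersHom H h), by
      have : h ^ (n : ℤ) = 1 := by rw [zpow_natCast, hh]
      exact (show (MonoidHom.toAdditiveRight (zpowersHom H h)) (n : ℤ) = 0 from congrArg Additive.ofMul this)⟩ m
  simp only [homOfPow]
  rw [show (MonoidHom.toAdditiveRight.symm (ZMod.lift n ⟨MonoidHom.toAdditiveRight (zpowersHom H h), _⟩)) (Multiplicative.ofAdd ((m : ℤ) : ZMod n)) = Additive.toMul ((ZMod.lift n ⟨MonoidHom.toAdditiveRight (zpowersHom H h), _⟩) ((m : ℤ) : ZMod n)) from rfl, this]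
  rfl

lemma homOfPow_exists_zpow (h : H) (n : ℕ) (hh : h ^ n = 1) (x : Multiplicative (ZMod n)) :
    ∃ m : ℤ, homOfPow h n hh x = h ^ m := by
  obtain ⟨m, hm⟩ := ZMod.intCast_surjective (Multiplicative.toAdd x)
  refine ⟨m, ?_⟩
  rw [← homOfPow_apply_int h n hh m]
  congr 1
  rw [hm]
  rfl

lemma homOfPow_one' (h : H) (n : ℕ) (hh : h ^ n = 1) :
    homOfPow h n hh (Multiplicative.ofAdd ((1 : ZMod n))) = h := by
  have : ((1 : ℤ) : ZMod n) = (1 : ZMod n) := by push_cast; rfl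
  rw [← this, homOfPow_apply_int, zpow_one]

end Tau5Aux

namespace Tau5Aux

variable {H : Type*} [Group H]

lemma card_mult_zmod (n : ℕ) : Nat.card (Multiplicative (ZMod n)) = n := Nat.card_zmod n

lemma iso_of_three (u v w : H) (n1 n2 n3 : ℕ)
    (e1 : u ^ n1 = 1) (e2 : v ^ n2 = 1) (e3 : w ^ n3 = 1)
    (cuv : Commute u v) (cuw : Commute u w) (cvw : Commute v w)
    (hgen : Subgroup.closure {u, v, w} = ⊤)
    (hfin : Finite H)
    (hcard : Nat.card H = n1 * (n2 * n3)) (hn1 : n1 ≠ 0) (hn2 : n2 ≠ 0) (hn3 : n3 ≠ 0) :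
    Nonempty (H ≃* Multiplicative (ZMod n1) × Multiplicative (ZMod n2) × Multiplicative (ZMod n3)) := by
  haveI : NeZero n1 := ⟨hn1⟩
  haveI : NeZero n2 := ⟨hn2⟩
  haveI : NeZero n3 := ⟨hn3⟩
  have c23 : ∀ x y, Commute (homOfPow v n2 e2 x) (homOfPow w n3 e3 y) := by
    intro x y
    obtain ⟨m, hm⟩ := homOfPow_exists_zpow v n2 e2 x
    obtain ⟨k, hk⟩ := homOfPow_exists_zpow w n3 e3 y
    rw [hm, hk]; exact cvw.zpow_zpow m k
  set φ23 : Multiplicative (ZMod n2) × Multiplicative (ZMod n3) →* H :=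
    (homOfPow v n2 e2).noncommCoprod (homOfPow w n3 e3) c23 with hφ23
  have c123 : ∀ x y, Commute (homOfPow u n1 e1 x) (φ23 y) := by
    intro x y
    obtain ⟨m, hm⟩ := homOfPow_exists_zpow u n1 e1 x
    obtain ⟨k, hk⟩ := homOfPow_exists_zpow v n2 e2 y.1
    obtain ⟨l, hl⟩ := homOfPow_exists_zpow w n3 e3 y.2
    have : φ23 y = v ^ k * w ^ l := by
      rw [hφ23]; simp [MonoidHom.noncommCoprod_apply, hk, hl]
    rw [hm, this]
    exact ((cuv.zpow_zpow m k).mul_right (cuw.zpow_zpow m l))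
  set φ : Multiplicative (ZMod n1) × Multiplicative (ZMod n2) × Multiplicative (ZMod n3) →* H :=
    (homOfPow u n1 e1).noncommCoprod φ23 c123 with hφ
  have hu : u ∈ φ.range := ⟨(Multiplicative.ofAdd ((1:ℤ) : ZMod n1), 1, 1), by
    simp [hφ, hφ23, MonoidHom.noncommCoprod_apply, homOfPow_one']⟩
  have hv : v ∈ φ.range := ⟨(1, Multiplicative.ofAdd ((1:ℤ) : ZMod n2), 1), by
    simp [hφ, hφ23, MonoidHom.noncommCoprod_apply, homOfPow_one']⟩
  have hw : w ∈ φ.range := ⟨(1, 1, Multiplicative.ofAdd ((1:ℤ) : ZMod n3)), by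
    simp [hφ, hφ23, MonoidHom.noncommCoprod_apply, homOfPow_one']⟩
  have hsurj : Function.Surjective φ := by
    rw [← MonoidHom.range_eq_top]
    rw [← top_le_iff, ← hgen]
    rw [Subgroup.closure_le]
    rintro x (rfl | rfl | rfl) <;> assumption
  have hcard' : Nat.card (Multiplicative (ZMod n1) × Multiplicative (ZMod n2) × Multiplicative (ZMod n3)) = Nat.card H := by
    rw [hcard, Nat.card_prod, Nat.card_prod, card_mult_zmod, card_mult_zmod, card_mult_zmod]
  have hbij : Function.Bijective φ := (Nat.bijective_iff_surjective_and_card φ).mpr ⟨hsurj, hcard'⟩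
  exact ⟨(MulEquiv.ofBijective φ hbij).symm⟩

end Tau5Aux

namespace Tau5Aux

variable {G : Type*} [Group G]

lemma conj_pow_eq {a b : G} (h2 : Commute ⁅a, b⁆ a) (h3 : Commute ⁅a, b⁆ b) (n : ℕ) :
    a * b ^ n * a⁻¹ = ⁅a, b⁆ ^ n * b ^ n := by
  induction n with
  | zero => simp
  | succ n ih =>
    have hab : a * b * a⁻¹ = ⁅a, b⁆ * b := by
      rw [commutatorElement_def]; group
    calc a * b ^ (n+1) * a⁻¹ = (a * b ^ n * a⁻¹) * (a * b * a⁻¹) := by group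
    _ = (⁅a, b⁆ ^ n * b ^ n) * (⁅a, b⁆ * b) := by rw [ih, hab]
    _ = ⁅a, b⁆ ^ (n+1) * b ^ (n+1) := by
        have : b ^ n * ⁅a, b⁆ = ⁅a, b⁆ * b ^ n := ((h3.symm.pow_left n)).eq
        rw [pow_succ b, pow_succ ⁅a, b⁆, mul_assoc, ← mul_assoc (b ^ n), this]
        group

lemma conj_pow_pow_eq {a b : G} (h2 : Commute ⁅a, b⁆ a) (h3 : Commute ⁅a, b⁆ b) (m n : ℕ) :
    a ^ m * b ^ n * a⁻¹ ^ m = ⁅a, b⁆ ^ (m * n) * b ^ n := by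
  induction m with
  | zero => simp
  | succ m ih =>
    calc a ^ (m+1) * b ^ n * a⁻¹ ^ (m+1)
        = a * (a ^ m * b ^ n * a⁻¹ ^ m) * a⁻¹ := by
          rw [pow_succ a, pow_succ a⁻¹]; group
    _ = a * (⁅a, b⁆ ^ (m * n) * b ^ n) * a⁻¹ := by rw [ih]
    _ = ⁅a, b⁆ ^ (m * n) * (a * b ^ n * a⁻¹) := by
          have : a * ⁅a, b⁆ ^ (m * n) = ⁅a, b⁆ ^ (m * n) * a := ((h2.pow_left (m*n))).symm.eq
          rw [← mul_assoc, ← mul_assoc, this]; group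
    _ = ⁅a, b⁆ ^ (m * n) * (⁅a, b⁆ ^ n * b ^ n) := by rw [conj_pow_eq h2 h3]
    _ = ⁅a, b⁆ ^ ((m+1) * n) * b ^ n := by rw [← mul_assoc, ← pow_add]; ring_nf

lemma commutator_pow_pow {a b : G} (h2 : Commute ⁅a, b⁆ a) (h3 : Commute ⁅a, b⁆ b) (m n : ℕ) :
    ⁅a ^ m, b ^ n⁆ = ⁅a, b⁆ ^ (m * n) := by
  have := conj_pow_pow_eq h2 h3 m n
  rw [commutatorElement_def, ← inv_pow a m, this]
  group

lemma closure_pair_prod {N : Type*} [Group N] (g : G) (h : N) :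
    Subgroup.closure {((g, 1) : G × N), ((1 : G), h)} =
      (Subgroup.zpowers g).prod (Subgroup.zpowers h) := by
  apply le_antisymm
  · rw [Subgroup.closure_le]
    rintro x (rfl | rfl)
    · exact ⟨Subgroup.mem_zpowers g, Subgroup.one_mem _⟩
    · exact ⟨Subgroup.one_mem _, Subgroup.mem_zpowers h⟩
  · rintro ⟨x, y⟩ ⟨⟨m, hm⟩, ⟨n, hn⟩⟩
    have : (x, y) = ((g, (1:N)) : G × N) ^ m * (((1:G), h) : G × N) ^ n := by
      simp only [Prod.pow_mk, Prod.mk_mul_mk, one_zpow, mul_one, one_mul]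
      rw [show g ^ m = x from hm, show h ^ n = y from hn]
    rw [this]
    exact mul_mem (zpow_mem (Subgroup.subset_closure (by simp)) m)
      (zpow_mem (Subgroup.subset_closure (by simp)) n)

end Tau5Aux


/-- The subgroup `⟨a^{p^δ}, b^{p^δ}, [a,b]⟩`. -/
def Zsub {G : Type} [Group G] (a b : G) (p δ : ℕ) : Subgroup G :=
  Subgroup.closure {a ^ p ^ δ, b ^ p ^ δ, ⁅a, b⁆}

/-- The subgroup `⟨[a,b]^{p^k}⟩`. -/
def Ksub {G : Type} [Group G] (a b : G) (p k : ℕ) : Subgroup G :=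
  Subgroup.closure {⁅a, b⁆ ^ p ^ k}

/-- The cyclic group of order `m`. -/
abbrev Cyc (m : ℕ) : Type := Multiplicative (ZMod m)

/-- For the group `G = G_{(γ,γ,γ;ρ,γ)}`, the quotient
`⟨a^{p^δ}, b^{p^δ}, [a,b]⟩ / ⟨[a,b]^{p^δ}⟩` is isomorphic to
`C_{p^{γ-ρ}} × C_{p^{γ-δ}} × C_{p^ρ}` if `ρ < δ < γ-ρ`, and to
`C_{p^{γ-δ}} × C_{p^{γ-δ}} × C_{p^δ}` otherwise. -/
theorem quotient_structure_tau5 {G : Type} [Group G] {p γ ρ : ℕ}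
    (hp : p.Prime) (hodd : Odd p) (hγ : 1 ≤ γ) (hρ : ρ ≤ γ)
    (a b : G)
    (h1 : ⁅a, b⁆ ^ p ^ γ = 1)
    (h2 : ⁅⁅a, b⁆, a⁆ = 1)
    (h3 : ⁅⁅a, b⁆, b⁆ = 1)
    (h4 : a ^ p ^ γ = ⁅a, b⁆ ^ p ^ ρ)
    (h5 : b ^ p ^ γ = 1)
    (hgen : Subgroup.closure {a, b} = ⊤)
    (hcard : Nat.card G = p ^ (3 * γ))
    [∀ k δ : ℕ, ((Ksub a b p k).subgroupOf (Zsub a b p δ)).Normal]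
    (δ : ℕ) (hδ1 : 1 ≤ δ) (hδ2 : δ ≤ γ) :
    ((ρ < δ ∧ δ < γ - ρ) →
      Nonempty ((Zsub a b p δ ⧸ (Ksub a b p δ).subgroupOf (Zsub a b p δ)) ≃*
        (Cyc (p ^ (γ - ρ)) × Cyc (p ^ (γ - δ)) × Cyc (p ^ ρ)))) ∧
    (¬ (ρ < δ ∧ δ < γ - ρ) →
      Nonempty ((Zsub a b p δ ⧸ (Ksub a b p δ).subgroupOf (Zsub a b p δ)) ≃*
        (Cyc (p ^ (γ - δ)) × Cyc (p ^ (γ - δ)) × Cyc (p ^ δ)))) := by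
  classical
  have hp0 : 0 < p := hp.pos
  haveI : NeZero (p ^ γ) := ⟨by positivity⟩
  set c : G := ⁅a, b⁆ with hc
  haveI hfinG : Finite G := Nat.finite_of_card_ne_zero (by rw [hcard]; positivity)
  have hca : Commute c a := commutatorElement_eq_one_iff_commute.mp h2
  have hcb : Commute c b := commutatorElement_eq_one_iff_commute.mp h3
  have hcent : ∀ g : G, Commute c g := by
    intro g
    have hsub : Subgroup.closure {a, b} ≤ Subgroup.centralizer {c} := by
      rw [Subgroup.closure_le]
      rintro x (rfl | rfl)
      · exact Subgroup.mem_centralizer_iff.mpr (by rintro y rfl; exact hca.eq)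
      · exact Subgroup.mem_centralizer_iff.mpr (by rintro y rfl; exact hcb.eq)
    rw [hgen] at hsub
    exact Subgroup.mem_centralizer_iff.mp (hsub (Subgroup.mem_top g)) c rfl
  -- the central subgroup N = ⟨c⟩
  set N : Subgroup G := Subgroup.zpowers c with hN
  haveI hNnormal : N.Normal := by
    constructor
    intro n hn g
    obtain ⟨m, hm⟩ := Subgroup.mem_zpowers_iff.mp hn
    have key : g * n * g⁻¹ = n := by
      rw [← hm, ← ((hcent g).zpow_left m).eq]
      group
    rw [key]; exact hn
  set π : G →* G ⧸ N := QuotientGroup.mk' N with hπ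
  have hπc : π c = 1 := (QuotientGroup.eq_one_iff c).mpr (Subgroup.mem_zpowers c)
  have hA : (π a) ^ p ^ γ = 1 := by
    rw [← map_pow, h4, map_pow, hπc, one_pow]
  have hB : (π b) ^ p ^ γ = 1 := by rw [← map_pow, h5, map_one]
  have hcomm_ab : Commute (π a) (π b) := by
    apply commutatorElement_eq_one_iff_commute.mp
    rw [← map_commutatorElement, ← hc, hπc]
  have c12 : ∀ x y, Commute (Tau5Aux.homOfPow (π a) (p ^ γ) hA x)
      (Tau5Aux.homOfPow (π b) (p ^ γ) hB y) := by
    intro x y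
    obtain ⟨m, hm⟩ := Tau5Aux.homOfPow_exists_zpow (π a) (p ^ γ) hA x
    obtain ⟨k, hk⟩ := Tau5Aux.homOfPow_exists_zpow (π b) (p ^ γ) hB y
    rw [hm, hk]; exact hcomm_ab.zpow_zpow m k
  set f2 : Cyc (p ^ γ) × Cyc (p ^ γ) →* G ⧸ N :=
    (Tau5Aux.homOfPow (π a) (p ^ γ) hA).noncommCoprod (Tau5Aux.homOfPow (π b) (p ^ γ) hB) c12
    with hf2
  have hπsurj : Function.Surjective π := QuotientGroup.mk'_surjective N
  have hclosπ : Subgroup.closure ({π a, π b} : Set (G ⧸ N)) = ⊤ := by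
    have : ({π a, π b} : Set (G ⧸ N)) = π '' {a, b} := by
      rw [Set.image_insert_eq, Set.image_singleton]
    rw [this, ← MonoidHom.map_closure, hgen, Subgroup.map_top_of_surjective π hπsurj]
  have hf2surj : Function.Surjective f2 := by
    rw [← MonoidHom.range_eq_top, ← top_le_iff, ← hclosπ, Subgroup.closure_le]
    rintro x (rfl | rfl)
    · exact ⟨(Multiplicative.ofAdd ((1 : ZMod (p ^ γ))), 1), by
        simp [hf2, MonoidHom.noncommCoprod_apply, Tau5Aux.homOfPow_one']⟩
    · exact ⟨(1, Multiplicative.ofAdd ((1 : ZMod (p ^ γ)))), by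
        simp [hf2, MonoidHom.noncommCoprod_apply, Tau5Aux.homOfPow_one']⟩
  -- counting
  have hlag : Nat.card G = Nat.card (G ⧸ N) * Nat.card N :=
    Subgroup.card_eq_card_quotient_mul_card_subgroup N
  have hNle : Nat.card N ≤ p ^ γ := by
    rw [hN, Nat.card_zpowers]
    exact Nat.le_of_dvd (by positivity) (orderOf_dvd_of_pow_eq_one h1)
  have hQle : Nat.card (G ⧸ N) ≤ p ^ γ * p ^ γ := by
    have := Nat.card_le_card_of_surjective f2 hf2surj
    rwa [Nat.card_prod, Tau5Aux.card_mult_zmod] at this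
  have hNpos : 0 < Nat.card N := Nat.card_pos
  have h3γeq : p ^ (3 * γ) = (p ^ γ * p ^ γ) * p ^ γ := by
    rw [← pow_add, ← pow_add]; congr 1; ring
  have hQcard : Nat.card (G ⧸ N) = p ^ γ * p ^ γ := by
    refine le_antisymm hQle ?_
    have h1' : (p ^ γ * p ^ γ) * p ^ γ = Nat.card (G ⧸ N) * Nat.card N := by
      rw [← h3γeq, ← hcard, hlag]
    have h2' : Nat.card (G ⧸ N) * Nat.card N ≤ Nat.card (G ⧸ N) * p ^ γ :=
      Nat.mul_le_mul_left _ hNle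
    have := h1'.le.trans h2'
    exact Nat.le_of_mul_le_mul_right this (by positivity)
  have hNcard : Nat.card N = p ^ γ := by
    have h1' : Nat.card (G ⧸ N) * Nat.card N = (p ^ γ * p ^ γ) * p ^ γ := by
      rw [← h3γeq, ← hcard, hlag]
    rw [hQcard] at h1'
    exact Nat.eq_of_mul_eq_mul_left (by positivity) h1'
  have hordc : orderOf c = p ^ γ := by rw [← Nat.card_zpowers, ← hN, hNcard]
  have hf2bij : Function.Bijective f2 := by
    refine (Nat.bijective_iff_surjective_and_card f2).mpr ⟨hf2surj, ?_⟩
    rw [Nat.card_prod, Tau5Aux.card_mult_zmod, hQcard]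
  -- membership of generators
  have hmemA : a ^ p ^ δ ∈ Zsub a b p δ := Subgroup.subset_closure (by left; rfl)
  have hmemB : b ^ p ^ δ ∈ Zsub a b p δ := Subgroup.subset_closure (by right; left; rfl)
  have hmemC : c ∈ Zsub a b p δ := Subgroup.subset_closure (by right; right; rfl)
  -- Zbar and its cardinality
  set Zb : Subgroup (G ⧸ N) := (Zsub a b p δ).map π with hZb
  have hZbar_eq : Zb = Subgroup.closure {π (a ^ p ^ δ), π (b ^ p ^ δ)} := by
    rw [hZb, Zsub, MonoidHom.map_closure]
    have himg : π '' {a ^ p ^ δ, b ^ p ^ δ, ⁅a, b⁆} =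
        {π (a ^ p ^ δ), π (b ^ p ^ δ), (1 : G ⧸ N)} := by
      rw [Set.image_insert_eq, Set.image_insert_eq, Set.image_singleton, ← hc, hπc]
    rw [himg]
    apply le_antisymm
    · rw [Subgroup.closure_le]
      rintro x (rfl | rfl | rfl)
      · exact Subgroup.subset_closure (by left; rfl)
      · exact Subgroup.subset_closure (by right; rfl)
      · exact Subgroup.one_mem _
    · exact Subgroup.closure_mono (by intro x hx; rcases hx with rfl | rfl
                                      exacts [Or.inl rfl, Or.inr (Or.inl rfl)])
  -- identify generators with images under f2
  set g1 : Cyc (p ^ γ) := Multiplicative.ofAdd (((p ^ δ : ℕ) : ℤ) : ZMod (p ^ γ)) with hg1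
  have hf2s1 : f2 ((g1, 1) : Cyc (p ^ γ) × Cyc (p ^ γ)) = π (a ^ p ^ δ) := by
    rw [hf2, MonoidHom.noncommCoprod_apply]
    simp only [map_one, mul_one]
    rw [hg1, Tau5Aux.homOfPow_apply_int, zpow_natCast, map_pow]
  have hf2s2 : f2 (((1 : Cyc (p ^ γ)), g1) : Cyc (p ^ γ) × Cyc (p ^ γ)) = π (b ^ p ^ δ) := by
    rw [hf2, MonoidHom.noncommCoprod_apply]
    simp only [map_one, one_mul]
    rw [hg1, Tau5Aux.homOfPow_apply_int, zpow_natCast, map_pow]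
  have hordg1 : orderOf g1 = p ^ (γ - δ) := by
    rw [hg1]
    rw [show (((p ^ δ : ℕ) : ℤ) : ZMod (p ^ γ)) = ((p ^ δ : ℕ) : ZMod (p ^ γ)) by push_cast; rfl]
    rw [orderOf_ofAdd_eq_addOrderOf, ZMod.addOrderOf_coe _ (by positivity),
      Nat.gcd_eq_right (pow_dvd_pow p hδ2), Nat.pow_div hδ2 hp0]
  have hZbcard : Nat.card Zb = p ^ (γ - δ) * p ^ (γ - δ) := by
    have heq : Zb = Subgroup.map f2 (Subgroup.closure {((g1, 1) : Cyc (p ^ γ) × Cyc (p ^ γ)), (1, g1)}) := by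
      rw [MonoidHom.map_closure, Set.image_pair, hf2s1, hf2s2, hZbar_eq]
    rw [heq, ← Nat.card_congr (Subgroup.equivMapOfInjective _ f2 hf2bij.injective).toEquiv]
    rw [Nat.card_congr (Subgroup.equivMapOfInjective _ f2 hf2bij.injective).toEquiv]
    rw [show Nat.card (Subgroup.map f2 (Subgroup.closure {((g1, 1) : Cyc (p ^ γ) × Cyc (p ^ γ)), (1, g1)}))
        = Nat.card (Subgroup.closure {((g1, 1) : Cyc (p ^ γ) × Cyc (p ^ γ)), (1, g1)}) from
      (Nat.card_congr (Subgroup.equivMapOfInjective _ f2 hf2bij.injective).toEquiv).symm]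
    rw [Tau5Aux.closure_pair_prod g1 g1]
    rw [Nat.card_congr (Subgroup.prodEquiv (Subgroup.zpowers g1) (Subgroup.zpowers g1)).toEquiv]
    rw [Nat.card_prod, Nat.card_zpowers, hordg1]
  -- cardinality of Zsub
  have hNleZ : N ≤ Zsub a b p δ := Subgroup.zpowers_le.mpr hmemC
  set π' : ↥(Zsub a b p δ) →* G ⧸ N := π.comp (Zsub a b p δ).subtype with hπ'
  have hker : π'.ker = N.subgroupOf (Zsub a b p δ) := by
    rw [hπ', ← MonoidHom.comap_ker, hπ, QuotientGroup.ker_mk']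
    rfl
  have hrange : π'.range = Zb := by
    rw [hπ', MonoidHom.range_comp, Subgroup.range_subtype, hZb]
  have hZcard : Nat.card (Zsub a b p δ) = (p ^ (γ - δ) * p ^ (γ - δ)) * p ^ γ := by
    have l1 : Nat.card (Zsub a b p δ) = Nat.card (↥(Zsub a b p δ) ⧸ π'.ker) * Nat.card π'.ker :=
      Subgroup.card_eq_card_quotient_mul_card_subgroup π'.ker
    have l2 : Nat.card (↥(Zsub a b p δ) ⧸ π'.ker) = Nat.card Zb := by
      rw [Nat.card_congr (QuotientGroup.quotientKerEquivRange π').toEquiv, hrange]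
    have l3 : Nat.card π'.ker = p ^ γ := by
      rw [hker, Nat.card_congr (Subgroup.subgroupOfEquivOfLe hNleZ).toEquiv, hNcard]
    rw [l1, l2, l3, hZbcard]
  -- cardinality of Ksub
  have hK : Ksub a b p δ = Subgroup.zpowers (c ^ p ^ δ) := by
    rw [Ksub, Subgroup.zpowers_eq_closure, hc]
  have hKcard : Nat.card (Ksub a b p δ) = p ^ (γ - δ) := by
    rw [hK, Nat.card_zpowers, orderOf_pow, hordc,
      Nat.gcd_eq_right (pow_dvd_pow p hδ2), Nat.pow_div hδ2 hp0]
  have hKleZ : Ksub a b p δ ≤ Zsub a b p δ := by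
    rw [hK, Subgroup.zpowers_le]
    exact pow_mem hmemC _
  -- cardinality of the quotient H
  have hHcard : Nat.card ((Zsub a b p δ) ⧸ (Ksub a b p δ).subgroupOf (Zsub a b p δ))
      = p ^ (γ - δ) * p ^ γ := by
    have l1 : Nat.card (Zsub a b p δ)
        = Nat.card ((Zsub a b p δ) ⧸ (Ksub a b p δ).subgroupOf (Zsub a b p δ))
          * Nat.card ((Ksub a b p δ).subgroupOf (Zsub a b p δ)) :=
      Subgroup.card_eq_card_quotient_mul_card_subgroup _
    have l2 : Nat.card ((Ksub a b p δ).subgroupOf (Zsub a b p δ)) = p ^ (γ - δ) := by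
      rw [Nat.card_congr (Subgroup.subgroupOfEquivOfLe hKleZ).toEquiv, hKcard]
    rw [l2, hZcard] at l1
    apply Nat.eq_of_mul_eq_mul_right (show 0 < p ^ (γ - δ) by positivity)
    rw [← l1]; ring
  -- elements of the quotient H
  haveI hKnorm : ((Ksub a b p δ).subgroupOf (Zsub a b p δ)).Normal := inferInstance
  set mk : ↥(Zsub a b p δ) →* (Zsub a b p δ) ⧸ (Ksub a b p δ).subgroupOf (Zsub a b p δ) :=
    QuotientGroup.mk' _ with hmk
  set X : ↥(Zsub a b p δ) := ⟨a ^ p ^ δ, hmemA⟩ with hX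
  set Y : ↥(Zsub a b p δ) := ⟨b ^ p ^ δ, hmemB⟩ with hY
  set Zc : ↥(Zsub a b p δ) := ⟨c, hmemC⟩ with hZc
  set xb := mk X with hxb
  set yb := mk Y with hyb
  set zb := mk Zc with hzb
  have hmk_one : ∀ (W : ↥(Zsub a b p δ)), (W : G) ∈ Ksub a b p δ → mk W = 1 := by
    intro W hW
    rw [hmk]
    exact (QuotientGroup.eq_one_iff W).mpr (Subgroup.mem_subgroupOf.mpr hW)
  have hKpow : ∀ m : ℕ, c ^ (p ^ δ * m) ∈ Ksub a b p δ := by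
    intro m
    rw [pow_mul]
    have hbase : ⁅a, b⁆ ^ p ^ δ ∈ Ksub a b p δ := Subgroup.subset_closure rfl
    rw [hc]
    exact pow_mem hbase m
  have hz_pow : zb ^ p ^ δ = 1 := by
    rw [hzb, ← map_pow]
    apply hmk_one
    show c ^ p ^ δ ∈ Ksub a b p δ
    simpa using hKpow 1
  have hy_pow : yb ^ p ^ (γ - δ) = 1 := by
    rw [hyb, ← map_pow]
    have : Y ^ p ^ (γ - δ) = 1 := by
      apply Subtype.ext
      show (b ^ p ^ δ) ^ p ^ (γ - δ) = 1
      rw [← pow_mul, ← pow_add, show δ + (γ - δ) = γ by omega, h5]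
    rw [this, map_one]
  have hx_pow : xb ^ p ^ (γ - δ) = zb ^ p ^ ρ := by
    rw [hxb, hzb, ← map_pow, ← map_pow]
    congr 1
    apply Subtype.ext
    show (a ^ p ^ δ) ^ p ^ (γ - δ) = c ^ p ^ ρ
    rw [← pow_mul, ← pow_add, show δ + (γ - δ) = γ by omega, h4]
  have hcomm_xy : Commute xb yb := by
    apply commutatorElement_eq_one_iff_commute.mp
    rw [hxb, hyb, ← map_commutatorElement]
    apply hmk_one
    show ((⁅X, Y⁆ : ↥(Zsub a b p δ)) : G) ∈ Ksub a b p δ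
    have hXY : ((⁅X, Y⁆ : ↥(Zsub a b p δ)) : G) = ⁅a ^ p ^ δ, b ^ p ^ δ⁆ := rfl
    rw [hXY, Tau5Aux.commutator_pow_pow hca hcb, ← hc]
    exact hKpow (p ^ δ)
  have hz_comm : ∀ h, Commute zb h := by
    intro h
    obtain ⟨g, rfl⟩ := QuotientGroup.mk'_surjective _ h
    have : Commute Zc g := by
      apply Subtype.ext
      show c * (g : G) = (g : G) * c
      exact (hcent g).eq
    exact this.map mk
  -- generation of H
  have hgenH : Subgroup.closure {xb, yb, zb} = ⊤ := by
    rw [eq_top_iff]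
    intro h htriv
    clear htriv
    obtain ⟨⟨g, hg⟩, rfl⟩ := QuotientGroup.mk'_surjective _ h
    have goal : ∀ (hg : g ∈ Subgroup.closure {a ^ p ^ δ, b ^ p ^ δ, ⁅a, b⁆}),
        mk ⟨g, hg⟩ ∈ Subgroup.closure {xb, yb, zb} := by
      intro hg
      induction hg using Subgroup.closure_induction with
      | mem x hx =>
        rcases hx with rfl | rfl | rfl
        · exact Subgroup.subset_closure (by left; rfl)
        · exact Subgroup.subset_closure (by right; left; rfl)
        · exact Subgroup.subset_closure (by right; right; rfl)
      | one =>
        rw [show (⟨1, _⟩ : ↥(Zsub a b p δ)) = 1 from rfl, map_one]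
        exact Subgroup.one_mem _
      | mul x y hx hy ihx ihy =>
        rw [show (⟨x * y, _⟩ : ↥(Zsub a b p δ)) = ⟨x, hx⟩ * ⟨y, hy⟩ from rfl, map_mul]
        exact Subgroup.mul_mem _ (ihx hx) (ihy hy)
      | inv x hx ihx =>
        rw [show (⟨x⁻¹, _⟩ : ↥(Zsub a b p δ)) = (⟨x, hx⟩ : ↥(Zsub a b p δ))⁻¹ from rfl, map_inv]
        exact Subgroup.inv_mem _ (ihx hx)
    exact goal hg
  haveI hfinZ : Finite ↥(Zsub a b p δ) := inferInstance
  haveI hfinH : Finite ((Zsub a b p δ) ⧸ (Ksub a b p δ).subgroupOf (Zsub a b p δ)) :=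
    Quotient.finite _
  constructor
  · rintro ⟨hρδ, hδγρ⟩
    have hδρlt : δ + ρ < γ := by omega
    set t : ℕ := p ^ (γ - δ - ρ) with ht
    set w := zb * (xb ^ t)⁻¹ with hw
    have e1 : xb ^ p ^ (γ - ρ) = 1 := by
      rw [show γ - ρ = (γ - δ) + (δ - ρ) by omega, pow_add, pow_mul, hx_pow, ← pow_mul,
        ← pow_add, show ρ + (δ - ρ) = δ by omega, hz_pow]
    have e3 : w ^ p ^ ρ = 1 := by
      have hcm : Commute zb ((xb ^ t)⁻¹) := (hz_comm (xb ^ t)).inv_right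
      rw [hw, hcm.mul_pow, inv_pow, ← pow_mul,
        show t * p ^ ρ = p ^ (γ - δ) by rw [ht, ← pow_add]; congr 1; omega,
        hx_pow, mul_inv_cancel]
    have cuw : Commute xb w := by
      rw [hw]
      exact ((hz_comm xb).symm).mul_right (((Commute.refl xb).pow_right t).inv_right)
    have cvw : Commute yb w := by
      rw [hw]
      exact ((hz_comm yb).symm).mul_right ((hcomm_xy.symm.pow_right t).inv_right)
    have hzw : zb = w * xb ^ t := by rw [hw, inv_mul_cancel_right]
    have hgen3 : Subgroup.closure {xb, yb, w} = ⊤ := by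
      rw [eq_top_iff, ← hgenH, Subgroup.closure_le]
      rintro g (rfl | rfl | rfl)
      · exact Subgroup.subset_closure (by left; rfl)
      · exact Subgroup.subset_closure (by right; left; rfl)
      · rw [SetLike.mem_coe, hzw]
        exact Subgroup.mul_mem _ (Subgroup.subset_closure (by right; right; rfl))
          (pow_mem (Subgroup.subset_closure (by left; rfl)) t)
    have hcardeq : Nat.card ((Zsub a b p δ) ⧸ (Ksub a b p δ).subgroupOf (Zsub a b p δ))
        = p ^ (γ - ρ) * (p ^ (γ - δ) * p ^ ρ) := by
      rw [hHcard, ← pow_add, ← pow_add, ← pow_add]; congr 1; omega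
    exact Tau5Aux.iso_of_three xb yb w _ _ _ e1 hy_pow e3 hcomm_xy cuw cvw hgen3 hfinH
      hcardeq (by positivity) (by positivity) (by positivity)
  · intro hnot
    rcases le_or_gt δ ρ with hδρ | hρδ
    · -- δ ≤ ρ
      have e1 : xb ^ p ^ (γ - δ) = 1 := by
        rw [hx_pow, show ρ = δ + (ρ - δ) by omega, pow_add, pow_mul, hz_pow, one_pow]
      have hcardeq : Nat.card ((Zsub a b p δ) ⧸ (Ksub a b p δ).subgroupOf (Zsub a b p δ))
          = p ^ (γ - δ) * (p ^ (γ - δ) * p ^ δ) := by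
        rw [hHcard, ← pow_add, ← pow_add, ← pow_add]; congr 1; omega
      exact Tau5Aux.iso_of_three xb yb zb _ _ _ e1 hy_pow hz_pow hcomm_xy
        (hz_comm xb).symm (hz_comm yb).symm hgenH hfinH hcardeq
        (by positivity) (by positivity) (by positivity)
    · -- ρ < δ, hence γ - ρ ≤ δ
      have hge : γ ≤ ρ + δ := by
        rcases Nat.lt_or_ge δ (γ - ρ) with hlt | hge'
        · exact absurd ⟨hρδ, hlt⟩ hnot
        · omega
      set s : ℕ := p ^ (ρ - (γ - δ)) with hs
      set u := xb * (zb ^ s)⁻¹ with hu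
      have e1 : u ^ p ^ (γ - δ) = 1 := by
        have hcm : Commute xb ((zb ^ s)⁻¹) := ((hz_comm xb).symm.pow_right s).inv_right
        rw [hu, hcm.mul_pow, inv_pow, ← pow_mul,
          show s * p ^ (γ - δ) = p ^ ρ by rw [hs, ← pow_add]; congr 1; omega,
          hx_pow, mul_inv_cancel]
      have cuv : Commute u yb := by
        rw [hu]
        exact hcomm_xy.mul_left (((hz_comm yb).pow_left s).inv_left)
      have cuw : Commute u zb := by
        rw [hu]
        exact ((hz_comm xb).symm).mul_left (((Commute.refl zb).pow_left s).inv_left)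
      have hxu : xb = u * zb ^ s := by rw [hu, inv_mul_cancel_right]
      have hgen3 : Subgroup.closure {u, yb, zb} = ⊤ := by
        rw [eq_top_iff, ← hgenH, Subgroup.closure_le]
        rintro g (rfl | rfl | rfl)
        · rw [SetLike.mem_coe, hxu]
          exact Subgroup.mul_mem _ (Subgroup.subset_closure (by left; rfl))
            (pow_mem (Subgroup.subset_closure (by right; right; rfl)) s)
        · exact Subgroup.subset_closure (by right; left; rfl)
        · exact Subgroup.subset_closure (by right; right; rfl)
      have hcardeq : Nat.card ((Zsub a b p δ) ⧸ (Ksub a b p δ).subgroupOf (Zsub a b p δ))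
          = p ^ (γ - δ) * (p ^ (γ - δ) * p ^ δ) := by
        rw [hHcard, ← pow_add, ← pow_add, ← pow_add]; congr 1; omega
      exact Tau5Aux.iso_of_three u yb zb _ _ _ e1 hy_pow hz_pow cuv cuw
        (hz_comm yb).symm hgen3 hfinH hcardeq
        (by positivity) (by positivity) (by positivity)
end
end

section
/- Let p be an odd prime, γ ≥ 1, 0 ≤ ρ ≤ γ, and let G = ⟨a, b | [a,b]^{p^γ} = [[a,b],a] = [[a,b],b] = 1, a^{p^γ} = [a,b]^{p^ρ}, b^{p^γ} = 1⟩ (the group G_{(γ,γ,γ;ρ,γ)}). For each 1 ≤ δ ≤ γ, the abelian quotient ⟨a^{p^δ}, b^{p^δ}, [a,b]⟩/⟨[a,b]^{p^{δ−1}}⟩ is isomorphic to C_{p^{γ−ρ−1}} × C_{p^{γ−δ}} × C_{p^ρ} if ρ < δ < γ−ρ, and to C_{p^{γ−δ}} × C_{p^{γ−δ}} × C_{p^{δ−1}} otherwise. -/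
set_option autoImplicit false

open scoped commutatorElement
set_option maxHeartbeats 1600000

noncomputable section

lemma semiconj_zpow_aux {G : Type} [Group G] (x y z : G) (hzx : Commute z x) (hzy : Commute z y)
    (h : y * x * y⁻¹ = z * x) : ∀ J I : ℤ, y ^ J * x ^ I = z ^ (J * I) * x ^ I * y ^ J := by
  have h1 : ∀ I : ℤ, y * x ^ I = z ^ I * x ^ I * y := by
    intro I
    have : y * x ^ I * y⁻¹ = z ^ I * x ^ I := by
      calc y * x ^ I * y⁻¹ = (y * x * y⁻¹) ^ I := by rw [conj_zpow]
        _ = (z * x) ^ I := by rw [h]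
        _ = z ^ I * x ^ I := hzx.mul_zpow I
    calc y * x ^ I = (y * x ^ I * y⁻¹) * y := by group
      _ = z ^ I * x ^ I * y := by rw [this]
  have h1' : ∀ I : ℤ, y⁻¹ * x ^ I = z ^ (-I) * x ^ I * y⁻¹ := by
    intro I
    have e1 : x ^ I * y = y * (z ^ (-I) * x ^ I) := by
      have := h1 I
      have hc : z ^ (-I) * z ^ I = 1 := by group
      calc x ^ I * y = z ^ (-I) * (z ^ I * x ^ I * y) := by rw [← mul_assoc, ← mul_assoc, hc]; group
        _ = z ^ (-I) * (y * x ^ I) := by rw [← this]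
        _ = y * (z ^ (-I) * x ^ I) := by
            rw [← mul_assoc, (hzy.zpow_left (-I)).eq, mul_assoc]
    calc y⁻¹ * x ^ I = y⁻¹ * (x ^ I * y) * y⁻¹ := by group
      _ = y⁻¹ * (y * (z ^ (-I) * x ^ I)) * y⁻¹ := by rw [e1]
      _ = z ^ (-I) * x ^ I * y⁻¹ := by group
  intro J I
  induction J using Int.induction_on with
  | zero => simp
  | succ j ih =>
      calc y ^ ((j : ℤ) + 1) * x ^ I = y ^ (j : ℤ) * (y * x ^ I) := by
            rw [zpow_add, zpow_one, mul_assoc]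
        _ = y ^ (j : ℤ) * (z ^ I * x ^ I * y) := by rw [h1]
        _ = (y ^ (j : ℤ) * z ^ I) * x ^ I * y := by group
        _ = (z ^ I * y ^ (j : ℤ)) * x ^ I * y := by rw [← (hzy.zpow_zpow I j).eq]
        _ = z ^ I * (y ^ (j : ℤ) * x ^ I) * y := by group
        _ = z ^ I * (z ^ ((j : ℤ) * I) * x ^ I * y ^ (j : ℤ)) * y := by rw [ih]
        _ = z ^ (((j : ℤ) + 1) * I) * x ^ I * y ^ ((j : ℤ) + 1) := by
            rw [show ((j : ℤ) + 1) * I = I + (j : ℤ) * I by ring, zpow_add]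
            group
  | pred j ih =>
      calc y ^ (-(j : ℤ) - 1) * x ^ I = y ^ (-(j : ℤ)) * (y⁻¹ * x ^ I) := by group
        _ = y ^ (-(j : ℤ)) * (z ^ (-I) * x ^ I * y⁻¹) := by rw [h1']
        _ = (y ^ (-(j : ℤ)) * z ^ (-I)) * x ^ I * y⁻¹ := by group
        _ = (z ^ (-I) * y ^ (-(j : ℤ))) * x ^ I * y⁻¹ := by rw [← (hzy.zpow_zpow (-I) (-j)).eq]
        _ = z ^ (-I) * (y ^ (-(j : ℤ)) * x ^ I) * y⁻¹ := by group
        _ = z ^ (-I) * (z ^ (-(j : ℤ) * I) * x ^ I * y ^ (-(j : ℤ))) * y⁻¹ := by rw [ih]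
        _ = z ^ ((-(j : ℤ) - 1) * I) * x ^ I * y ^ (-(j : ℤ) - 1) := by
            rw [show (-(j : ℤ) - 1) * I = -I + -(j : ℤ) * I by ring, zpow_add]
            group

lemma core {G : Type} [Group G] {p γ ρ : ℕ}
    (hp : p.Prime) (hγ : 1 ≤ γ) (hρ : ρ ≤ γ)
    (a b : G)
    (h1 : ⁅a, b⁆ ^ p ^ γ = 1)
    (h2 : ⁅⁅a, b⁆, a⁆ = 1)
    (h3 : ⁅⁅a, b⁆, b⁆ = 1)
    (h4 : a ^ p ^ γ = ⁅a, b⁆ ^ p ^ ρ)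
    (h5 : b ^ p ^ γ = 1)
    (hgen : Subgroup.closure {a, b} = ⊤)
    (hcard : Nat.card G = p ^ (3 * γ))
    (δ : ℕ) (hδ1 : 1 ≤ δ) (hδ2 : δ ≤ γ) :
    orderOf ⁅a, b⁆ = p ^ γ ∧ Nat.card (Zsub a b p δ) = p ^ (3 * γ - 2 * δ) ∧
      (∀ m : ℕ, ⁅a ^ m, b ^ m⁆ = ⁅a, b⁆ ^ (m * m)) := by
  set c := ⁅a, b⁆ with hc
  have hca : Commute c a := commutatorElement_eq_one_iff_commute.mp h2
  have hcb : Commute c b := commutatorElement_eq_one_iff_commute.mp h3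
  have hppos : 0 < p := hp.pos
  set n := p ^ γ with hn
  have hn1 : 1 < n := Nat.one_lt_pow (by omega) hp.one_lt
  haveI : NeZero n := ⟨by omega⟩
  have hGfin : Finite G := by
    have h0 : 0 < Nat.card G := by rw [hcard]; positivity
    exact (Nat.card_pos_iff.mp h0).2
  have hkey : ∀ J I : ℤ, b ^ J * a ^ I = c ^ (-(J * I)) * a ^ I * b ^ J := by
    intro J I
    have hh : b * a * b⁻¹ = c⁻¹ * a := by rw [hc, commutatorElement_def]; group
    have := semiconj_zpow_aux a b c⁻¹ hca.inv_left hcb.inv_left hh J I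
    rwa [inv_zpow, ← zpow_neg] at this
  have hcommAB : ∀ m : ℕ, ⁅a ^ m, b ^ m⁆ = c ^ (m * m) := by
    intro m
    have h' : b ^ (m:ℤ) * a ^ (-(m:ℤ)) = c ^ ((m:ℤ) * (m:ℤ)) * a ^ (-(m:ℤ)) * b ^ (m:ℤ) := by
      have h := hkey (m : ℤ) (-(m : ℤ))
      rw [show -((m:ℤ) * -(m:ℤ)) = (m:ℤ) * (m:ℤ) by ring] at h
      exact h
    have e1 : (a ^ m : G) = a ^ (m:ℤ) := (zpow_natCast a m).symm
    have e2 : (b ^ m : G) = b ^ (m:ℤ) := (zpow_natCast b m).symm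
    calc ⁅a ^ m, b ^ m⁆ = a ^ (m:ℤ) * (b ^ (m:ℤ) * a ^ (-(m:ℤ))) * b ^ (-(m:ℤ)) := by
          rw [commutatorElement_def, e1, e2]
          group
      _ = a ^ (m:ℤ) * (c ^ ((m:ℤ) * (m:ℤ)) * a ^ (-(m:ℤ)) * b ^ (m:ℤ)) * b ^ (-(m:ℤ)) := by
          rw [h']
      _ = (a ^ (m:ℤ) * c ^ ((m:ℤ) * (m:ℤ))) * a ^ (-(m:ℤ)) * (b ^ (m:ℤ) * b ^ (-(m:ℤ))) := by
          group
      _ = (c ^ ((m:ℤ) * (m:ℤ)) * a ^ (m:ℤ)) * a ^ (-(m:ℤ)) * (b ^ (m:ℤ) * b ^ (-(m:ℤ))) := by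
          rw [← ((hca.zpow_left ((m:ℤ) * (m:ℤ))).zpow_right (m:ℤ)).eq]
      _ = c ^ ((m:ℤ) * (m:ℤ)) := by group
      _ = c ^ (m * m : ℕ) := by
          rw [← zpow_natCast c (m * m)]
          norm_cast
  set F : ℤ → ℤ → ℤ → G := fun I J K => a ^ I * b ^ J * c ^ K with hF
  have hF1 : ∀ I J K I' J' K' : ℤ,
      F I J K * F I' J' K' = F (I + I') (J + J') (K + K' - J * I') := by
    intro I J K I' J' K'
    show a ^ I * b ^ J * c ^ K * (a ^ I' * b ^ J' * c ^ K')
        = a ^ (I + I') * b ^ (J + J') * c ^ (K + K' - J * I')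
    calc a ^ I * b ^ J * c ^ K * (a ^ I' * b ^ J' * c ^ K')
        = a ^ I * b ^ J * (c ^ K * a ^ I') * (b ^ J' * c ^ K') := by group
      _ = a ^ I * b ^ J * (a ^ I' * c ^ K) * (b ^ J' * c ^ K') := by
          rw [((hca.zpow_left K).zpow_right I').eq]
      _ = a ^ I * (b ^ J * a ^ I') * ((c ^ K * b ^ J') * c ^ K') := by group
      _ = a ^ I * (b ^ J * a ^ I') * ((b ^ J' * c ^ K) * c ^ K') := by
          rw [((hcb.zpow_left K).zpow_right J').eq]
      _ = a ^ I * (c ^ (-(J * I')) * a ^ I' * b ^ J) * ((b ^ J' * c ^ K) * c ^ K') := by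
          rw [hkey J I']
      _ = (a ^ I * c ^ (-(J * I'))) * (a ^ I' * (b ^ J * b ^ J') * (c ^ K * c ^ K')) := by group
      _ = (c ^ (-(J * I')) * a ^ I) * (a ^ I' * (b ^ J * b ^ J') * (c ^ K * c ^ K')) := by
          rw [← ((hca.zpow_left (-(J * I'))).zpow_right I).eq]
      _ = c ^ (-(J * I')) * (a ^ (I + I') * (b ^ (J + J') * (c ^ K * c ^ K'))) := by
          rw [zpow_add a, zpow_add b]; group
      _ = a ^ (I + I') * (c ^ (-(J * I')) * (b ^ (J + J') * (c ^ K * c ^ K'))) := by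
          rw [← mul_assoc, ← mul_assoc, ((hca.zpow_left (-(J * I'))).zpow_right (I + I')).eq]
          group
      _ = a ^ (I + I') * ((c ^ (-(J * I')) * b ^ (J + J')) * (c ^ K * c ^ K')) := by group
      _ = a ^ (I + I') * ((b ^ (J + J') * c ^ (-(J * I'))) * (c ^ K * c ^ K')) := by
          rw [((hcb.zpow_left (-(J * I'))).zpow_right (J + J')).eq]
      _ = a ^ (I + I') * b ^ (J + J') * c ^ (K + K' - J * I') := by
          rw [show K + K' - J * I' = -(J * I') + (K + K') by ring, zpow_add, zpow_add]
          group
  have hF000 : F 0 0 0 = 1 := by show a ^ (0:ℤ) * b ^ (0:ℤ) * c ^ (0:ℤ) = 1; simp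
  -- range of F is all of G
  have hFsurj : ∀ g : G, ∃ I J K : ℤ, g = F I J K := by
    let R : Subgroup G :=
      { carrier := {g | ∃ I J K : ℤ, g = F I J K}
        one_mem' := ⟨0, 0, 0, hF000.symm⟩
        mul_mem' := by
          rintro x y ⟨I, J, K, rfl⟩ ⟨I', J', K', rfl⟩
          exact ⟨_, _, _, hF1 I J K I' J' K'⟩
        inv_mem' := by
          rintro x ⟨I, J, K, rfl⟩
          refine ⟨-I, -J, -K - J * I, ?_⟩
          have : F I J K * F (-I) (-J) (-K - J * I) = 1 := by
            rw [hF1]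
            have e1 : I + -I = 0 := by ring
            have e2 : J + -J = 0 := by ring
            have e3 : K + (-K - J * I) - J * -I = 0 := by ring
            rw [e1, e2, e3, hF000]
          exact inv_eq_of_mul_eq_one_right this }
    have hsub : Subgroup.closure {a, b} ≤ R := by
      rw [Subgroup.closure_le]
      refine Set.insert_subset_iff.mpr ⟨⟨1, 0, 0, ?_⟩, Set.singleton_subset_iff.mpr ⟨0, 1, 0, ?_⟩⟩
      · show a = a ^ (1:ℤ) * b ^ (0:ℤ) * c ^ (0:ℤ); simp
      · show b = a ^ (0:ℤ) * b ^ (1:ℤ) * c ^ (0:ℤ); simp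
    intro g
    exact hsub (hgen ▸ Subgroup.mem_top g)
  -- shifting lemmas
  have hshiftA : ∀ I J K q : ℤ, F (I + n * q) J K = F I J (K + p ^ ρ * q) := by
    intro I J K q
    show a ^ (I + n * q) * b ^ J * c ^ K = a ^ I * b ^ J * c ^ (K + p ^ ρ * q)
    have han : a ^ ((n : ℤ) * q) = c ^ ((p : ℤ) ^ ρ * q) := by
      have hcast : ((p : ℤ)) ^ ρ = ((p ^ ρ : ℕ) : ℤ) := by push_cast; ring
      rw [zpow_mul, hcast, zpow_mul]
      congr 1
      rw [zpow_natCast, zpow_natCast, h4]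
    rw [zpow_add, han]
    calc a ^ I * c ^ ((p : ℤ) ^ ρ * q) * b ^ J * c ^ K
        = a ^ I * (c ^ ((p : ℤ) ^ ρ * q) * b ^ J) * c ^ K := by group
      _ = a ^ I * (b ^ J * c ^ ((p : ℤ) ^ ρ * q)) * c ^ K := by
          rw [((hcb.zpow_left _).zpow_right J).eq]
      _ = a ^ I * b ^ J * c ^ (K + (p : ℤ) ^ ρ * q) := by
          rw [zpow_add]; group
  have hshiftB : ∀ I J K q : ℤ, F I (J + n * q) K = F I J K := by
    intro I J K q
    show a ^ I * b ^ (J + n * q) * c ^ K = a ^ I * b ^ J * c ^ K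
    have hbn : b ^ ((n : ℤ) * q) = 1 := by
      rw [zpow_mul]
      have : b ^ (n : ℤ) = 1 := by rw [zpow_natCast, hn, h5]
      rw [this, one_zpow]
    rw [zpow_add, hbn, mul_one]
  have hshiftC : ∀ I J K q : ℤ, F I J (K + n * q) = F I J K := by
    intro I J K q
    show a ^ I * b ^ J * c ^ (K + n * q) = a ^ I * b ^ J * c ^ K
    have hcn : c ^ ((n : ℤ) * q) = 1 := by
      rw [zpow_mul]
      have : c ^ (n : ℤ) = 1 := by rw [zpow_natCast, hn, hc, h1]
      rw [this, one_zpow]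
    rw [zpow_add, hcn, mul_one]
  -- reduction to ZMod coordinates
  have hvalred : ∀ X : ℤ, ∃ q : ℤ, X = ((X : ZMod n).val : ℤ) + n * q := by
    intro X
    have : ((X - ((X : ZMod n).val : ℤ) : ℤ) : ZMod n) = 0 := by
      push_cast
      simp [ZMod.natCast_val, ZMod.cast_id]
    obtain ⟨q, hq⟩ := (ZMod.intCast_zmod_eq_zero_iff_dvd _ n).mp this
    exact ⟨q, by linarith⟩
  set hmap : ZMod n × ZMod n × ZMod n → G :=
    fun t => F (t.1.val : ℤ) (t.2.1.val : ℤ) (t.2.2.val : ℤ) with hhmap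
  have hred : ∀ X Y Z : ℤ, ∃ w : ZMod n, F X Y Z = hmap ((X : ZMod n), (Y : ZMod n), w) := by
    intro X Y Z
    obtain ⟨q1, hq1⟩ := hvalred X
    obtain ⟨q2, hq2⟩ := hvalred Y
    obtain ⟨q3, hq3⟩ := hvalred (Z + (p : ℤ) ^ ρ * q1)
    refine ⟨((Z + (p : ℤ) ^ ρ * q1 : ℤ) : ZMod n), ?_⟩
    show F X Y Z = F (((X : ZMod n).val : ℤ)) (((Y : ZMod n).val : ℤ))
        ((((Z + (p : ℤ) ^ ρ * q1 : ℤ) : ZMod n)).val : ℤ)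
    calc F X Y Z = F (((X : ZMod n).val : ℤ) + n * q1) Y Z := by rw [← hq1]
      _ = F (((X : ZMod n).val : ℤ)) Y (Z + (p : ℤ) ^ ρ * q1) := hshiftA _ _ _ _
      _ = F (((X : ZMod n).val : ℤ)) (((Y : ZMod n).val : ℤ) + n * q2) (Z + (p : ℤ) ^ ρ * q1) := by
          rw [← hq2]
      _ = F (((X : ZMod n).val : ℤ)) (((Y : ZMod n).val : ℤ)) (Z + (p : ℤ) ^ ρ * q1) :=
          hshiftB _ _ _ _
      _ = F (((X : ZMod n).val : ℤ)) (((Y : ZMod n).val : ℤ))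
            (((((Z + (p : ℤ) ^ ρ * q1 : ℤ) : ZMod n)).val : ℤ) + n * q3) := by rw [← hq3]
      _ = F (((X : ZMod n).val : ℤ)) (((Y : ZMod n).val : ℤ))
            ((((Z + (p : ℤ) ^ ρ * q1 : ℤ) : ZMod n)).val : ℤ) := hshiftC _ _ _ _
  have hmsurj : Function.Surjective hmap := by
    intro g
    obtain ⟨I, J, K, rfl⟩ := hFsurj g
    obtain ⟨w, hw⟩ := hred I J K
    exact ⟨_, hw.symm⟩
  have hcards : Nat.card (ZMod n × ZMod n × ZMod n) = Nat.card G := by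
    rw [hcard, Nat.card_prod, Nat.card_prod, Nat.card_zmod, hn, ← pow_add, ← pow_add]
    congr 1
    omega
  have hmbij : Function.Bijective hmap :=
    (Nat.bijective_iff_surjective_and_card hmap).mpr ⟨hmsurj, hcards⟩
  set heq := Equiv.ofBijective hmap hmbij with hheq
  have hP : ∀ X Y Z : ℤ, (heq.symm (F X Y Z)).1 = (X : ZMod n) ∧
      (heq.symm (F X Y Z)).2.1 = (Y : ZMod n) := by
    intro X Y Z
    obtain ⟨w, hw⟩ := hred X Y Z
    have : heq.symm (F X Y Z) = ((X : ZMod n), (Y : ZMod n), w) := by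
      rw [Equiv.symm_apply_eq, hheq]
      exact hw
    rw [this]
    exact ⟨rfl, rfl⟩
  -- order of c
  have hdvdc : ∀ K : ℤ, c ^ K = 1 → (n : ℤ) ∣ K := by
    intro K hK
    obtain ⟨q, hq⟩ := hvalred K
    have hcval : c ^ (((K : ZMod n).val : ℤ)) = 1 := by
      have : c ^ K = c ^ (((K : ZMod n).val : ℤ)) * (c ^ (n : ℤ)) ^ q := by
        rw [← zpow_mul, ← zpow_add, ← hq]
      have hcn : c ^ (n : ℤ) = 1 := by rw [zpow_natCast, h1]
      rw [hcn, one_zpow, mul_one] at this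
      rw [← this, hK]
    have e1 : hmap (0, 0, (K : ZMod n)) = 1 := by
      show F ((ZMod.val (0 : ZMod n) : ℕ) : ℤ) ((ZMod.val (0 : ZMod n) : ℕ) : ℤ)
          ((ZMod.val ((K : ℤ) : ZMod n) : ℕ) : ℤ) = 1
      rw [ZMod.val_zero]
      show a ^ ((0:ℕ):ℤ) * b ^ ((0:ℕ):ℤ) * c ^ ((ZMod.val ((K : ℤ) : ZMod n) : ℕ) : ℤ) = 1
      simpa using hcval
    have e0 : hmap (0, 0, 0) = 1 := by
      show F ((ZMod.val (0 : ZMod n) : ℕ) : ℤ) ((ZMod.val (0 : ZMod n) : ℕ) : ℤ)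
          ((ZMod.val (0 : ZMod n) : ℕ) : ℤ) = 1
      rw [ZMod.val_zero]
      simpa using hF000
    have heqc := hmbij.1 (e1.trans e0.symm)
    have h3 : (K : ZMod n) = 0 := by
      have := congrArg (fun t => t.2.2) heqc
      simpa using this
    exact (ZMod.intCast_zmod_eq_zero_iff_dvd K n).mp h3
  have hordc : orderOf c = n := by
    have hdvd1 : orderOf c ∣ n := orderOf_dvd_of_pow_eq_one h1
    have hdvd2 : (n : ℤ) ∣ (orderOf c : ℤ) :=
      hdvdc _ (by rw [zpow_natCast, pow_orderOf_eq_one])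
    exact Nat.dvd_antisymm hdvd1 (Int.ofNat_dvd.mp hdvd2)
  -- the homomorphism E to (ZMod p^δ)²
  set dδ : ℕ := p ^ δ with hdδ
  haveI : NeZero dδ := ⟨by positivity⟩
  have hdvdδγ : dδ ∣ n := pow_dvd_pow p hδ2
  set cast2 : ZMod n →+* ZMod dδ := ZMod.castHom hdvdδγ (ZMod dδ) with hcast2
  set Efun : G → Multiplicative (ZMod dδ × ZMod dδ) := fun g =>
    Multiplicative.ofAdd (cast2 (heq.symm g).1, cast2 (heq.symm g).2.1) with hEfun
  have hEF : ∀ X Y Z : ℤ, Efun (F X Y Z)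
      = Multiplicative.ofAdd ((X : ZMod dδ), (Y : ZMod dδ)) := by
    intro X Y Z
    rw [hEfun]
    dsimp only
    rw [(hP X Y Z).1, (hP X Y Z).2]
    congr 1
    exact Prod.ext (map_intCast cast2 X) (map_intCast cast2 Y)
  set E : G →* Multiplicative (ZMod dδ × ZMod dδ) :=
    { toFun := Efun
      map_one' := by
        have h0 := hEF 0 0 0
        rw [hF000] at h0
        rw [h0]
        have : ((0 : ℤ) : ZMod dδ) = 0 := by push_cast; rfl
        rw [this]
        rfl
      map_mul' := by
        intro g g'
        obtain ⟨X, Y, Z, rfl⟩ := hFsurj g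
        obtain ⟨X', Y', Z', rfl⟩ := hFsurj g'
        show Efun (F X Y Z * F X' Y' Z') = Efun (F X Y Z) * Efun (F X' Y' Z')
        rw [hF1, hEF, hEF, hEF, ← ofAdd_add]
        congr 1
        rw [Prod.mk_add_mk]
        exact Prod.ext (by push_cast; ring) (by push_cast; ring) } with hE
  have hEapp : ∀ g : G, E g = Efun g := fun g => rfl
  have hEsurj : Function.Surjective E := by
    intro t
    obtain ⟨U, hU⟩ := ZMod.intCast_surjective (Multiplicative.toAdd t).1
    obtain ⟨V, hV⟩ := ZMod.intCast_surjective (Multiplicative.toAdd t).2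
    refine ⟨F U V 0, ?_⟩
    rw [hEapp, hEF, hU, hV]
    rfl
  have hkerE : Zsub a b p δ = E.ker := by
    apply le_antisymm
    · rw [Zsub, Subgroup.closure_le]
      intro x hx
      simp only [Set.mem_insert_iff, Set.mem_singleton_iff] at hx
      have hker1 : ∀ X Y Z : ℤ, (X : ZMod dδ) = 0 → (Y : ZMod dδ) = 0 → F X Y Z ∈ E.ker := by
        intro X Y Z hX hY
        rw [MonoidHom.mem_ker, hEapp, hEF, hX, hY]
        rfl
      rcases hx with rfl | rfl | rfl
      · show a ^ p ^ δ ∈ (E.ker : Set G)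
        have : a ^ p ^ δ = F ((dδ : ℕ) : ℤ) 0 0 := by
          show a ^ (p ^ δ : ℕ) = a ^ ((dδ : ℕ) : ℤ) * b ^ (0:ℤ) * c ^ (0:ℤ)
          rw [zpow_natCast, hdδ]
          simp
        rw [this]
        exact hker1 _ _ _ (by push_cast; simp [ZMod.natCast_self]) (by push_cast; rfl)
      · show b ^ p ^ δ ∈ (E.ker : Set G)
        have : b ^ p ^ δ = F 0 ((dδ : ℕ) : ℤ) 0 := by
          show b ^ (p ^ δ : ℕ) = a ^ (0:ℤ) * b ^ ((dδ : ℕ) : ℤ) * c ^ (0:ℤ)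
          rw [zpow_natCast, hdδ]
          simp
        rw [this]
        exact hker1 _ _ _ (by push_cast; rfl) (by push_cast; simp [ZMod.natCast_self])
      · show c ∈ (E.ker : Set G)
        have : c = F 0 0 1 := by
          show c = a ^ (0:ℤ) * b ^ (0:ℤ) * c ^ (1:ℤ)
          simp
        rw [this]
        exact hker1 _ _ _ (by push_cast; rfl) (by push_cast; rfl)
    · intro g hg
      obtain ⟨X, Y, Z, rfl⟩ := hFsurj g
      rw [MonoidHom.mem_ker, hEapp, hEF] at hg
      have hg' : ((X : ZMod dδ), (Y : ZMod dδ)) = (0, 0) := by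
        have := congrArg Multiplicative.toAdd hg
        simpa using this
      obtain ⟨X', hX'⟩ := (ZMod.intCast_zmod_eq_zero_iff_dvd X dδ).mp (congrArg Prod.fst hg')
      obtain ⟨Y', hY'⟩ := (ZMod.intCast_zmod_eq_zero_iff_dvd Y dδ).mp (congrArg Prod.snd hg')
      show F X Y Z ∈ Zsub a b p δ
      have hmem1 : a ^ p ^ δ ∈ Zsub a b p δ :=
        Subgroup.subset_closure (Set.mem_insert _ _)
      have hmem2 : b ^ p ^ δ ∈ Zsub a b p δ :=
        Subgroup.subset_closure (Set.mem_insert_of_mem _ (Set.mem_insert _ _))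
      have hmem3 : c ∈ Zsub a b p δ :=
        Subgroup.subset_closure (Set.mem_insert_of_mem _ (Set.mem_insert_of_mem _ (Set.mem_singleton _)))
      have m1 : a ^ X ∈ Zsub a b p δ := by
        rw [hX', zpow_mul, zpow_natCast]
        exact Subgroup.zpow_mem _ hmem1 X'
      have m2 : b ^ Y ∈ Zsub a b p δ := by
        rw [hY', zpow_mul, zpow_natCast]
        exact Subgroup.zpow_mem _ hmem2 Y'
      have m3 : c ^ Z ∈ Zsub a b p δ := Subgroup.zpow_mem _ hmem3 Z
      exact mul_mem (mul_mem m1 m2) m3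
  -- cardinality of Zsub
  have hcardZ : Nat.card (Zsub a b p δ) = p ^ (3 * γ - 2 * δ) := by
    have h6 := Subgroup.card_eq_card_quotient_mul_card_subgroup E.ker
    have h7 : Nat.card (G ⧸ E.ker) = p ^ (2 * δ) := by
      rw [Nat.card_congr (QuotientGroup.quotientKerEquivRange E).toEquiv,
        MonoidHom.range_eq_top.mpr hEsurj,
        Nat.card_congr Subgroup.topEquiv.toEquiv]
      have : Nat.card (Multiplicative (ZMod dδ × ZMod dδ)) = Nat.card (ZMod dδ × ZMod dδ) := rfl
      rw [this, Nat.card_prod, Nat.card_zmod, hdδ, ← pow_add]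
      congr 1
      omega
    rw [hcard, h7] at h6
    have hker : Nat.card E.ker = p ^ (3 * γ - 2 * δ) := by
      have hx : Nat.card E.ker = p ^ (3 * γ) / p ^ (2 * δ) := by
        rw [h6, Nat.mul_div_cancel_left _ (by positivity)]
      rw [hx, Nat.pow_div (by omega) hppos]
    rw [hkerE]
    exact hker
  exact ⟨hordc, hcardZ, hcommAB⟩

section AuxHom
variable {Q : Type*} [CommGroup Q]

def zmodHomAux (m : ℕ) (g : Q) (hg : g ^ m = 1) :
    {f : ℤ →+ Additive Q // f (m : ℤ) = 0} :=
  ⟨zmultiplesHom (Additive Q) (Additive.ofMul g), by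
    show ((m : ℤ) • Additive.ofMul g) = 0
    rw [← ofMul_zpow, zpow_natCast, hg, ofMul_one]⟩

def zmodHom (m : ℕ) (g : Q) (hg : g ^ m = 1) : Multiplicative (ZMod m) →* Q :=
  AddMonoidHom.toMultiplicativeLeft (ZMod.lift m (zmodHomAux m g hg))

lemma zmodHom_intCast (m : ℕ) (g : Q) (hg : g ^ m = 1) (X : ℤ) :
    zmodHom m g hg (Multiplicative.ofAdd ((X : ZMod m))) = g ^ X := by
  show Additive.toMul ((ZMod.lift m (zmodHomAux m g hg))
      (Multiplicative.toAdd (Multiplicative.ofAdd (X : ZMod m)))) = g ^ X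
  rw [toAdd_ofAdd, ZMod.lift_coe]
  show Additive.toMul ((X : ℤ) • Additive.ofMul g) = g ^ X
  rw [← ofMul_zpow]
  rfl

lemma zmodHom_one (m : ℕ) (g : Q) (hg : g ^ m = 1) :
    zmodHom m g hg (Multiplicative.ofAdd (1 : ZMod m)) = g := by
  have : ((1 : ℤ) : ZMod m) = (1 : ZMod m) := by push_cast; rfl
  rw [← this, zmodHom_intCast]
  exact zpow_one g

lemma iso_of_three_gens (g1 g2 g3 : Q) (m1 m2 m3 : ℕ)
    (hg1 : g1 ^ m1 = 1) (hg2 : g2 ^ m2 = 1) (hg3 : g3 ^ m3 = 1)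
    (hgen : Subgroup.closure {g1, g2, g3} = ⊤)
    (hcard : Nat.card Q = m1 * (m2 * m3)) (hm1 : m1 ≠ 0) (hm2 : m2 ≠ 0) (hm3 : m3 ≠ 0) :
    Nonempty (Q ≃* (Multiplicative (ZMod m1) × Multiplicative (ZMod m2) × Multiplicative (ZMod m3))) := by
  haveI : NeZero m1 := ⟨hm1⟩
  haveI : NeZero m2 := ⟨hm2⟩
  haveI : NeZero m3 := ⟨hm3⟩
  set ψ : (Multiplicative (ZMod m1) × Multiplicative (ZMod m2) × Multiplicative (ZMod m3)) →* Q :=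
    (zmodHom m1 g1 hg1).coprod ((zmodHom m2 g2 hg2).coprod (zmodHom m3 g3 hg3)) with hψ
  have hr1 : g1 ∈ ψ.range := by
    refine ⟨(Multiplicative.ofAdd (1 : ZMod m1), 1, 1), ?_⟩
    simp [hψ, MonoidHom.coprod_apply, zmodHom_one]
  have hr2 : g2 ∈ ψ.range := by
    refine ⟨(1, Multiplicative.ofAdd (1 : ZMod m2), 1), ?_⟩
    simp [hψ, MonoidHom.coprod_apply, zmodHom_one]
  have hr3 : g3 ∈ ψ.range := by
    refine ⟨(1, 1, Multiplicative.ofAdd (1 : ZMod m3)), ?_⟩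
    simp [hψ, MonoidHom.coprod_apply, zmodHom_one]
  have hsurj : Function.Surjective ψ := by
    rw [← MonoidHom.range_eq_top]
    rw [← top_le_iff, ← hgen, Subgroup.closure_le]
    intro x hx
    rcases hx with h | h | h <;> subst h <;> assumption
  have hcards : Nat.card (Multiplicative (ZMod m1) × Multiplicative (ZMod m2) × Multiplicative (ZMod m3))
      = Nat.card Q := by
    rw [hcard, Nat.card_prod, Nat.card_prod]
    congr 1 <;> [skip; congr 1] <;> exact Nat.card_zmod _
  have hbij : Function.Bijective ψ :=
    (Nat.bijective_iff_surjective_and_card ψ).mpr ⟨hsurj, hcards⟩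
  exact ⟨(MulEquiv.ofBijective ψ hbij).symm⟩

end AuxHom

lemma iso_of_three_gens' {Q : Type*} [Group Q] (hcomm : ∀ u v : Q, u * v = v * u)
    (g1 g2 g3 : Q) (m1 m2 m3 : ℕ)
    (hg1 : g1 ^ m1 = 1) (hg2 : g2 ^ m2 = 1) (hg3 : g3 ^ m3 = 1)
    (hgen : Subgroup.closure {g1, g2, g3} = ⊤)
    (hcard : Nat.card Q = m1 * (m2 * m3)) (hm1 : m1 ≠ 0) (hm2 : m2 ≠ 0) (hm3 : m3 ≠ 0) :
    Nonempty (Q ≃* (Multiplicative (ZMod m1) × Multiplicative (ZMod m2) × Multiplicative (ZMod m3))) := by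
  letI : CommGroup Q := { (inferInstance : Group Q) with mul_comm := hcomm }
  exact iso_of_three_gens g1 g2 g3 m1 m2 m3 hg1 hg2 hg3 hgen hcard hm1 hm2 hm3

/-- For the group `G = G_{(γ,γ,γ;ρ,γ)}`, the quotient
`⟨a^{p^δ}, b^{p^δ}, [a,b]⟩ / ⟨[a,b]^{p^{δ-1}}⟩` is isomorphic to
`C_{p^{γ-ρ-1}} × C_{p^{γ-δ}} × C_{p^ρ}` if `ρ < δ < γ-ρ`, and to
`C_{p^{γ-δ}} × C_{p^{γ-δ}} × C_{p^{δ-1}}` otherwise. -/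
theorem quotient_structure_tau5' {G : Type} [Group G] {p γ ρ : ℕ}
    (hp : p.Prime) (hodd : Odd p) (hγ : 1 ≤ γ) (hρ : ρ ≤ γ)
    (a b : G)
    (h1 : ⁅a, b⁆ ^ p ^ γ = 1)
    (h2 : ⁅⁅a, b⁆, a⁆ = 1)
    (h3 : ⁅⁅a, b⁆, b⁆ = 1)
    (h4 : a ^ p ^ γ = ⁅a, b⁆ ^ p ^ ρ)
    (h5 : b ^ p ^ γ = 1)
    (hgen : Subgroup.closure {a, b} = ⊤)
    (hcard : Nat.card G = p ^ (3 * γ))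
    [∀ k δ : ℕ, ((Ksub a b p k).subgroupOf (Zsub a b p δ)).Normal]
    (δ : ℕ) (hδ1 : 1 ≤ δ) (hδ2 : δ ≤ γ) :
    ((ρ < δ ∧ δ < γ - ρ) →
      Nonempty ((Zsub a b p δ ⧸ (Ksub a b p (δ - 1)).subgroupOf (Zsub a b p δ)) ≃*
        (Cyc (p ^ (γ - ρ - 1)) × Cyc (p ^ (γ - δ)) × Cyc (p ^ ρ)))) ∧
    (¬ (ρ < δ ∧ δ < γ - ρ) →
      Nonempty ((Zsub a b p δ ⧸ (Ksub a b p (δ - 1)).subgroupOf (Zsub a b p δ)) ≃*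
        (Cyc (p ^ (γ - δ)) × Cyc (p ^ (γ - δ)) × Cyc (p ^ (δ - 1))))) := by
  obtain ⟨hordc, hcardZ, hcommAB⟩ := core hp hγ hρ a b h1 h2 h3 h4 h5 hgen hcard δ hδ1 hδ2
  have hca : Commute ⁅a, b⁆ a := commutatorElement_eq_one_iff_commute.mp h2
  have hcb : Commute ⁅a, b⁆ b := commutatorElement_eq_one_iff_commute.mp h3
  set c : G := ⁅a, b⁆ with hc
  set Z : Subgroup G := Zsub a b p δ with hZ
  set Kk : Subgroup G := Ksub a b p (δ - 1) with hKk
  set K' : Subgroup Z := Kk.subgroupOf Z with hK'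
  haveI hN : K'.Normal := by rw [hK', hKk, hZ]; infer_instance
  have hSmem : ∀ x ∈ ({a ^ p ^ δ, b ^ p ^ δ, c} : Set G), x ∈ Z := fun x hx =>
    Subgroup.subset_closure hx
  have hAZ : a ^ p ^ δ ∈ Z := hSmem _ (Set.mem_insert _ _)
  have hBZ : b ^ p ^ δ ∈ Z := hSmem _ (Set.mem_insert_of_mem _ (Set.mem_insert _ _))
  have hcZ : c ∈ Z := hSmem _ (Set.mem_insert_of_mem _ (Set.mem_insert_of_mem _ (Set.mem_singleton _)))
  have hKZ : Kk ≤ Z := by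
    rw [hKk, Ksub, Subgroup.closure_le, Set.singleton_subset_iff]
    exact pow_mem hcZ _
  have hppos : 0 < p := hp.pos
  have hGfin : Finite G := by
    have h0 : 0 < Nat.card G := by rw [hcard]; positivity
    exact (Nat.card_pos_iff.mp h0).2
  -- cardinality of Kk and of the quotient
  have hcardK : Nat.card Kk = p ^ (γ - δ + 1) := by
    have e : Kk = Subgroup.zpowers (c ^ p ^ (δ - 1)) := by
      rw [hKk, Ksub, Subgroup.zpowers_eq_closure]
    rw [e, Nat.card_zpowers, orderOf_pow, hordc,
      Nat.gcd_eq_right (pow_dvd_pow p (by omega)), Nat.pow_div (by omega) hppos]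
    congr 1
    omega
  have hcardQ : Nat.card (Z ⧸ K') = p ^ (2 * γ - δ - 1) := by
    have h6 := Subgroup.card_eq_card_quotient_mul_card_subgroup K'
    have h7 : Nat.card K' = p ^ (γ - δ + 1) := by
      rw [hK', Nat.card_congr (Subgroup.subgroupOfEquivOfLe hKZ).toEquiv, hcardK]
    rw [hcardZ, h7] at h6
    have h8 : Nat.card (Z ⧸ K') = p ^ (3 * γ - 2 * δ) / p ^ (γ - δ + 1) := by
      rw [h6, Nat.mul_div_cancel _ (by positivity)]
    rw [h8, Nat.pow_div (by omega) hppos]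
    congr 1
    omega
  -- generators of the quotient
  set mk : Z →* Z ⧸ K' := QuotientGroup.mk' K' with hmk
  set Abar : Z ⧸ K' := mk ⟨a ^ p ^ δ, hAZ⟩ with hAbar
  set Bbar : Z ⧸ K' := mk ⟨b ^ p ^ δ, hBZ⟩ with hBbar
  set Cbar : Z ⧸ K' := mk ⟨c, hcZ⟩ with hCbar
  have hgenQ : Subgroup.closure {Abar, Bbar, Cbar} = ⊤ := by
    have h9 : Subgroup.closure (Subtype.val ⁻¹' ({a ^ p ^ δ, b ^ p ^ δ, c} : Set G) : Set Z) = ⊤ :=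
      Subgroup.closure_closure_coe_preimage
    have h10 : (mk '' (Subtype.val ⁻¹' ({a ^ p ^ δ, b ^ p ^ δ, c} : Set G)) : Set (Z ⧸ K'))
        ⊆ {Abar, Bbar, Cbar} := by
      rintro q ⟨z, hz, rfl⟩
      simp only [Set.mem_preimage, Set.mem_insert_iff, Set.mem_singleton_iff] at hz
      rcases hz with h | h | h
      · exact Or.inl (congrArg mk (Subtype.ext h))
      · exact Or.inr (Or.inl (congrArg mk (Subtype.ext h)))
      · exact Or.inr (Or.inr (congrArg mk (Subtype.ext h)))
    have h11 : (⊤ : Subgroup (Z ⧸ K')) ≤ Subgroup.closure {Abar, Bbar, Cbar} := by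
      calc (⊤ : Subgroup (Z ⧸ K')) = Subgroup.map mk ⊤ :=
            (Subgroup.map_top_of_surjective mk (QuotientGroup.mk'_surjective K')).symm
        _ = Subgroup.map mk (Subgroup.closure (Subtype.val ⁻¹' ({a ^ p ^ δ, b ^ p ^ δ, c} : Set G))) := by
            rw [h9]
        _ = Subgroup.closure (mk '' (Subtype.val ⁻¹' ({a ^ p ^ δ, b ^ p ^ δ, c} : Set G))) :=
            MonoidHom.map_closure mk _
        _ ≤ Subgroup.closure {Abar, Bbar, Cbar} := Subgroup.closure_mono h10
    exact le_antisymm le_top h11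
  -- the three generators commute
  have hcAB : Commute Abar Bbar := by
    apply commutatorElement_eq_one_iff_commute.mp
    rw [hAbar, hBbar, ← map_commutatorElement]
    rw [hmk, QuotientGroup.mk'_apply, QuotientGroup.eq_one_iff]
    rw [hK', Subgroup.mem_subgroupOf]
    show ((⁅(⟨a ^ p ^ δ, hAZ⟩ : Z), (⟨b ^ p ^ δ, hBZ⟩ : Z)⁆ : Z) : G) ∈ Kk
    have hval : ((⁅(⟨a ^ p ^ δ, hAZ⟩ : Z), (⟨b ^ p ^ δ, hBZ⟩ : Z)⁆ : Z) : G)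
        = c ^ (p ^ δ * p ^ δ) := by
      have e0 : ((⁅(⟨a ^ p ^ δ, hAZ⟩ : Z), (⟨b ^ p ^ δ, hBZ⟩ : Z)⁆ : Z) : G)
          = ⁅a ^ p ^ δ, b ^ p ^ δ⁆ := rfl
      rw [e0, hcommAB (p ^ δ)]
    rw [hval]
    have eexp : p ^ δ * p ^ δ = p ^ (δ - 1) * p ^ (δ + 1) := by
      rw [← pow_add, ← pow_add]
      congr 1
      omega
    rw [eexp, pow_mul, hKk, Ksub]
    have hg1 : c ^ p ^ (δ - 1) ∈ ({⁅a, b⁆ ^ p ^ (δ - 1)} : Set G) := by rw [hc]; exact rfl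
    exact pow_mem (Subgroup.subset_closure hg1) _
  have hcAC : Commute Abar Cbar := by
    have e : (⟨a ^ p ^ δ, hAZ⟩ : Z) * ⟨c, hcZ⟩ = ⟨c, hcZ⟩ * ⟨a ^ p ^ δ, hAZ⟩ :=
      Subtype.ext ((hca.pow_right _).symm.eq)
    have e2 : mk ((⟨a ^ p ^ δ, hAZ⟩ : Z) * ⟨c, hcZ⟩) = mk ((⟨c, hcZ⟩ : Z) * ⟨a ^ p ^ δ, hAZ⟩) :=
      congrArg mk e
    rw [map_mul, map_mul] at e2
    exact e2
  have hcBC : Commute Bbar Cbar := by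
    have e : (⟨b ^ p ^ δ, hBZ⟩ : Z) * ⟨c, hcZ⟩ = ⟨c, hcZ⟩ * ⟨b ^ p ^ δ, hBZ⟩ :=
      Subtype.ext ((hcb.pow_right _).symm.eq)
    have e2 : mk ((⟨b ^ p ^ δ, hBZ⟩ : Z) * ⟨c, hcZ⟩) = mk ((⟨c, hcZ⟩ : Z) * ⟨b ^ p ^ δ, hBZ⟩) :=
      congrArg mk e
    rw [map_mul, map_mul] at e2
    exact e2
  have hsubc : ∀ u ∈ ({Abar, Bbar, Cbar} : Set (Z ⧸ K')),
      ∀ w ∈ ({Abar, Bbar, Cbar} : Set (Z ⧸ K')), Commute u w := by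
    intro u hu w hw
    simp only [Set.mem_insert_iff, Set.mem_singleton_iff] at hu hw
    rcases hu with rfl | rfl | rfl <;> rcases hw with rfl | rfl | rfl
    · exact Commute.refl _
    · exact hcAB
    · exact hcAC
    · exact hcAB.symm
    · exact Commute.refl _
    · exact hcBC
    · exact hcAC.symm
    · exact hcBC.symm
    · exact Commute.refl _
  have hstep : ∀ u ∈ ({Abar, Bbar, Cbar} : Set (Z ⧸ K')), ∀ v : Z ⧸ K', Commute u v := by
    intro u hu v
    have hv : v ∈ Subgroup.closure ({Abar, Bbar, Cbar} : Set (Z ⧸ K')) := by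
      rw [hgenQ]
      exact Subgroup.mem_top v
    have hle : Subgroup.closure ({Abar, Bbar, Cbar} : Set (Z ⧸ K'))
        ≤ Subgroup.centralizer {u} := by
      rw [Subgroup.closure_le]
      intro w hw
      rw [SetLike.mem_coe, Subgroup.mem_centralizer_iff]
      intro g hg
      rw [Set.mem_singleton_iff] at hg
      rw [hg]
      exact (hsubc u hu w hw).eq
    exact Subgroup.mem_centralizer_iff.mp (hle hv) u rfl
  have hcomm : ∀ u v : Z ⧸ K', Commute u v := by
    intro u v
    have hu : u ∈ Subgroup.closure ({Abar, Bbar, Cbar} : Set (Z ⧸ K')) := by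
      rw [hgenQ]
      exact Subgroup.mem_top u
    have hle : Subgroup.closure ({Abar, Bbar, Cbar} : Set (Z ⧸ K'))
        ≤ Subgroup.centralizer {v} := by
      rw [Subgroup.closure_le]
      intro w hw
      rw [SetLike.mem_coe, Subgroup.mem_centralizer_iff]
      intro g hg
      rw [Set.mem_singleton_iff] at hg
      rw [hg]
      exact ((hstep w hw v).symm).eq
    exact (Subgroup.mem_centralizer_iff.mp (hle hu) v rfl).symm
  -- the relations
  have hrelA : Abar ^ (p ^ (γ - δ)) = Cbar ^ (p ^ ρ) := by
    have hGe : (⟨a ^ p ^ δ, hAZ⟩ : Z) ^ p ^ (γ - δ) = (⟨c, hcZ⟩ : Z) ^ p ^ ρ := by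
      apply Subtype.ext
      rw [SubmonoidClass.coe_pow, SubmonoidClass.coe_pow]
      rw [← pow_mul, ← pow_add, show δ + (γ - δ) = γ from by omega]
      exact h4
    rw [hAbar, hCbar, ← map_pow, ← map_pow, hGe]
  have hrelB : Bbar ^ (p ^ (γ - δ)) = 1 := by
    rw [hBbar, ← map_pow, hmk, QuotientGroup.mk'_apply, QuotientGroup.eq_one_iff]
    rw [hK', Subgroup.mem_subgroupOf]
    show ((⟨b ^ p ^ δ, hBZ⟩ ^ p ^ (γ - δ) : Z) : G) ∈ Kk
    rw [SubmonoidClass.coe_pow]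
    rw [← pow_mul, ← pow_add, show δ + (γ - δ) = γ from by omega, h5]
    exact one_mem _
  have hrelC : Cbar ^ (p ^ (δ - 1)) = 1 := by
    rw [hCbar, ← map_pow, hmk, QuotientGroup.mk'_apply, QuotientGroup.eq_one_iff]
    rw [hK', Subgroup.mem_subgroupOf]
    show ((⟨c, hcZ⟩ ^ p ^ (δ - 1) : Z) : G) ∈ Kk
    rw [SubmonoidClass.coe_pow, hKk, Ksub]
    have hg1 : c ^ p ^ (δ - 1) ∈ ({⁅a, b⁆ ^ p ^ (δ - 1)} : Set G) := by rw [hc]; exact rfl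
    exact Subgroup.subset_closure hg1
  have hpne : ∀ e : ℕ, p ^ e ≠ 0 := fun e => by positivity
  constructor
  · rintro ⟨hρδ, hδγρ⟩
    -- case ρ < δ < γ - ρ
    have hδρ : δ + ρ < γ := by omega
    set y : Z ⧸ K' := Abar with hy
    set x : Z ⧸ K' := Cbar * (Abar ^ p ^ (γ - δ - ρ))⁻¹ with hx
    have hyord : y ^ p ^ (γ - ρ - 1) = 1 := by
      rw [hy, show p ^ (γ - ρ - 1) = p ^ (γ - δ) * p ^ (δ - ρ - 1) from by
        rw [← pow_add]; congr 1; omega]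
      rw [pow_mul, hrelA, ← pow_mul, ← pow_add,
        show ρ + (δ - ρ - 1) = δ - 1 from by omega, hrelC]
    have hxord : x ^ p ^ ρ = 1 := by
      rw [hx, (hcomm Cbar ((Abar ^ p ^ (γ - δ - ρ))⁻¹)).mul_pow, inv_pow, ← pow_mul, ← pow_add,
        show γ - δ - ρ + ρ = γ - δ from by omega, hrelA, mul_inv_cancel]
    have hCrec : Cbar = x * y ^ p ^ (γ - δ - ρ) := by
      rw [hx, hy]
      group
    have hgen3 : Subgroup.closure {y, Bbar, x} = ⊤ := by
      refine le_antisymm le_top ?_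
      rw [← hgenQ, Subgroup.closure_le]
      intro w hw
      simp only [Set.mem_insert_iff, Set.mem_singleton_iff] at hw
      rcases hw with rfl | rfl | rfl
      · exact Subgroup.subset_closure (Set.mem_insert _ _)
      · exact Subgroup.subset_closure (Set.mem_insert_of_mem _ (Set.mem_insert _ _))
      · rw [hCrec]
        exact mul_mem
          (Subgroup.subset_closure (Set.mem_insert_of_mem _ (Set.mem_insert_of_mem _ (Set.mem_singleton _))))
          (pow_mem (Subgroup.subset_closure (Set.mem_insert _ _)) _)
    have hcards : Nat.card (Z ⧸ K') = p ^ (γ - ρ - 1) * (p ^ (γ - δ) * p ^ ρ) := by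
      rw [hcardQ, ← pow_add, ← pow_add]
      congr 1
      omega
    exact iso_of_three_gens' (fun u v => (hcomm u v).eq) y Bbar x _ _ _ hyord hrelB hxord hgen3 hcards
      (hpne _) (hpne _) (hpne _)
  · intro hnot
    by_cases hρδ : ρ < δ
    · -- then γ - ρ ≤ δ, so γ - δ ≤ ρ
      have hγδρ : γ - δ ≤ ρ := by omega
      set x : Z ⧸ K' := Abar * (Cbar ^ p ^ (ρ - (γ - δ)))⁻¹ with hx
      have hxord : x ^ p ^ (γ - δ) = 1 := by
        rw [hx, (hcomm Abar ((Cbar ^ p ^ (ρ - (γ - δ)))⁻¹)).mul_pow, inv_pow, ← pow_mul, ← pow_add,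
          show ρ - (γ - δ) + (γ - δ) = ρ from by omega, hrelA, mul_inv_cancel]
      have hArec : Abar = x * Cbar ^ p ^ (ρ - (γ - δ)) := by
        rw [hx]
        group
      have hgen3 : Subgroup.closure {x, Bbar, Cbar} = ⊤ := by
        refine le_antisymm le_top ?_
        rw [← hgenQ, Subgroup.closure_le]
        intro w hw
        simp only [Set.mem_insert_iff, Set.mem_singleton_iff] at hw
        rcases hw with rfl | rfl | rfl
        · rw [hArec]
          exact mul_mem (Subgroup.subset_closure (Set.mem_insert _ _))
            (pow_mem (Subgroup.subset_closure
              (Set.mem_insert_of_mem _ (Set.mem_insert_of_mem _ (Set.mem_singleton _)))) _)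
        · exact Subgroup.subset_closure (Set.mem_insert_of_mem _ (Set.mem_insert _ _))
        · exact Subgroup.subset_closure (Set.mem_insert_of_mem _ (Set.mem_insert_of_mem _ (Set.mem_singleton _)))
      have hcards : Nat.card (Z ⧸ K') = p ^ (γ - δ) * (p ^ (γ - δ) * p ^ (δ - 1)) := by
        rw [hcardQ, ← pow_add, ← pow_add]
        congr 1
        omega
      exact iso_of_three_gens' (fun u v => (hcomm u v).eq) x Bbar Cbar _ _ _ hxord hrelB hrelC hgen3 hcards
        (hpne _) (hpne _) (hpne _)
    · -- δ ≤ ρ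
      have hδρ : δ ≤ ρ := by omega
      have hAord : Abar ^ p ^ (γ - δ) = 1 := by
        rw [hrelA, show p ^ ρ = p ^ (δ - 1) * p ^ (ρ - δ + 1) from by
          rw [← pow_add]; congr 1; omega]
        rw [pow_mul, hrelC, one_pow]
      have hcards : Nat.card (Z ⧸ K') = p ^ (γ - δ) * (p ^ (γ - δ) * p ^ (δ - 1)) := by
        rw [hcardQ, ← pow_add, ← pow_add]
        congr 1
        omega
      exact iso_of_three_gens' (fun u v => (hcomm u v).eq) Abar Bbar Cbar _ _ _ hAord hrelB hrelC hgenQ hcards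
        (hpne _) (hpne _) (hpne _)
end
end
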